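/- arXiv:1108.4637 — 5 statements merged into one kernel-verified Lean document; each statement's English description precedes it below -/
import Mathlib

section
/- Let 𝔉 be a closed subset of ℂ and let f : 𝔉 → ℂ be continuous. The following are equivalent (quantifying over all complex Hilbert spaces): (i) ‖f(N)R − Rf(N)‖ ≤ ‖NR − RN‖ for every bounded normal operator N with spectrum contained in 𝔉 and every bounded operator R; (ii) ‖f(N₁)R − Rf(N₂)‖ ≤ ‖N₁R − RN₂‖ for all bounded normal operators N₁, N₂ with spectra contained in 𝔉 and every bounded operator R. -/
set_option linter.unusedSectionVars false
set_option maxHeartbeats 2000000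

noncomputable section Aux
open ContinuousLinearMap

variable {H : Type} [NormedAddCommGroup H] [InnerProductSpace ℂ H] [CompleteSpace H]

def eL : (WithLp 2 (H × H)) ≃L[ℂ] H × H := WithLp.prodContinuousLinearEquiv 2 ℂ H H

def dg (T S : H →L[ℂ] H) : (WithLp 2 (H × H)) →L[ℂ] (WithLp 2 (H × H)) :=
  (eL.symm.toContinuousLinearMap).comp ((T.prodMap S).comp eL.toContinuousLinearMap)

lemma dg_fst (T S : H →L[ℂ] H) (x : WithLp 2 (H × H)) : (dg T S x).fst = T x.fst := by
  simp [dg, eL]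

lemma dg_snd (T S : H →L[ℂ] H) (x : WithLp 2 (H × H)) : (dg T S x).snd = S x.snd := by
  simp [dg, eL]

lemma wlp_ext {x y : WithLp 2 (H × H)} (h1 : x.fst = y.fst) (h2 : x.snd = y.snd) : x = y :=
  WithLp.ofLp_injective (p := 2) (Prod.ext h1 h2)

lemma dg_mul (T S T' S' : H →L[ℂ] H) : dg T S * dg T' S' = dg (T * T') (S * S') := by
  ext x : 1
  exact wlp_ext (by simp [mul_apply, dg_fst, dg_snd]) (by simp [mul_apply, dg_fst, dg_snd])

lemma dg_one : dg (1 : H →L[ℂ] H) 1 = 1 := by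
  ext x : 1
  exact wlp_ext (by simp [dg_fst, one_apply]) (by simp [dg_snd, one_apply])

lemma dg_sub (T S T' S' : H →L[ℂ] H) : dg T S - dg T' S' = dg (T - T') (S - S') := by
  ext x : 1
  exact wlp_ext (by simp [sub_apply, dg_fst, dg_snd]) (by simp [sub_apply, dg_fst, dg_snd])

lemma dg_smul (c : ℂ) (T S : H →L[ℂ] H) : c • dg T S = dg (c • T) (c • S) := by
  ext x : 1
  exact wlp_ext (by simp [smul_apply, dg_fst, dg_snd]) (by simp [smul_apply, dg_fst, dg_snd])

lemma dg_star (T S : H →L[ℂ] H) : star (dg T S) = dg (star T) (star S) := by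
  rw [star_eq_adjoint]
  symm
  rw [eq_adjoint_iff]
  intro x y
  simp only [WithLp.prod_inner_apply, dg_fst, dg_snd, star_eq_adjoint, adjoint_inner_left]
  exact congrArg₂ (· + ·) (adjoint_inner_left T _ _) (adjoint_inner_left S _ _)

-- injections and projections
def inj1 : H →L[ℂ] WithLp 2 (H × H) :=
  (eL.symm.toContinuousLinearMap).comp (ContinuousLinearMap.inl ℂ H H)
def inj2 : H →L[ℂ] WithLp 2 (H × H) :=
  (eL.symm.toContinuousLinearMap).comp (ContinuousLinearMap.inr ℂ H H)
def prj1 : WithLp 2 (H × H) →L[ℂ] H :=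
  (ContinuousLinearMap.fst ℂ H H).comp eL.toContinuousLinearMap
def prj2 : WithLp 2 (H × H) →L[ℂ] H :=
  (ContinuousLinearMap.snd ℂ H H).comp eL.toContinuousLinearMap

lemma prj1_dg (T S : H →L[ℂ] H) : prj1.comp (dg T S) = T.comp prj1 := by
  ext x; simp [prj1, eL, comp_apply, dg_fst]
lemma prj2_dg (T S : H →L[ℂ] H) : prj2.comp (dg T S) = S.comp prj2 := by
  ext x; simp [prj2, eL, comp_apply, dg_snd]
lemma dg_inj1 (T S : H →L[ℂ] H) : (dg T S).comp inj1 = inj1.comp T := by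
  ext x
  refine wlp_ext ?_ ?_ <;> simp [inj1, eL, comp_apply, dg_fst, dg_snd]
lemma dg_inj2 (T S : H →L[ℂ] H) : (dg T S).comp inj2 = inj2.comp S := by
  ext x
  refine wlp_ext ?_ ?_ <;> simp [inj2, eL, comp_apply, dg_fst, dg_snd]
lemma prj1_inj1 : (prj1 : WithLp 2 (H × H) →L[ℂ] H).comp inj1 = 1 := by
  ext x; simp [prj1, inj1, eL, comp_apply, one_apply]
lemma prj2_inj2 : (prj2 : WithLp 2 (H × H) →L[ℂ] H).comp inj2 = 1 := by
  ext x; simp [prj2, inj2, eL, comp_apply, one_apply]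

lemma isUnit_dg_iff (T S : H →L[ℂ] H) : IsUnit (dg T S) ↔ IsUnit T ∧ IsUnit S := by
  constructor
  · intro h
    obtain ⟨U, hU1, hU2⟩ := isUnit_iff_exists.mp h
    constructor
    · refine isUnit_iff_exists.mpr ⟨prj1.comp (U.comp inj1), ?_, ?_⟩
      · have : T.comp (prj1.comp (U.comp inj1)) = prj1.comp (((dg T S) * U).comp inj1) := by
          rw [← comp_assoc, ← prj1_dg T S]
          rfl
        rw [show T * (prj1.comp (U.comp inj1)) = T.comp (prj1.comp (U.comp inj1)) from rfl,
          this, hU1]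
        simpa [ContinuousLinearMap.one_def] using prj1_inj1
      · have : (prj1.comp (U.comp inj1)).comp T = prj1.comp ((U * dg T S).comp inj1) := by
          rw [comp_assoc, comp_assoc, ← dg_inj1 T S]
          rfl
        rw [show (prj1.comp (U.comp inj1)) * T = (prj1.comp (U.comp inj1)).comp T from rfl,
          this, hU2]
        simpa [ContinuousLinearMap.one_def] using prj1_inj1
    · refine isUnit_iff_exists.mpr ⟨prj2.comp (U.comp inj2), ?_, ?_⟩
      · have : S.comp (prj2.comp (U.comp inj2)) = prj2.comp (((dg T S) * U).comp inj2) := by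
          rw [← comp_assoc, ← prj2_dg T S]
          rfl
        rw [show S * (prj2.comp (U.comp inj2)) = S.comp (prj2.comp (U.comp inj2)) from rfl,
          this, hU1]
        simpa [ContinuousLinearMap.one_def] using prj2_inj2
      · have : (prj2.comp (U.comp inj2)).comp S = prj2.comp ((U * dg T S).comp inj2) := by
          rw [comp_assoc, comp_assoc, ← dg_inj2 T S]
          rfl
        rw [show (prj2.comp (U.comp inj2)) * S = (prj2.comp (U.comp inj2)).comp S from rfl,
          this, hU2]
        simpa [ContinuousLinearMap.one_def] using prj2_inj2
  · rintro ⟨hT, hS⟩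
    obtain ⟨T', hT1, hT2⟩ := isUnit_iff_exists.mp hT
    obtain ⟨S', hS1, hS2⟩ := isUnit_iff_exists.mp hS
    exact isUnit_iff_exists.mpr ⟨dg T' S', by rw [dg_mul, hT1, hS1, dg_one],
      by rw [dg_mul, hT2, hS2, dg_one]⟩

lemma dg_algebraMap (z : ℂ) :
    algebraMap ℂ ((WithLp 2 (H × H)) →L[ℂ] (WithLp 2 (H × H))) z = dg (algebraMap ℂ _ z) (algebraMap ℂ _ z) := by
  simp only [Algebra.algebraMap_eq_smul_one]
  rw [← dg_smul, dg_one]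

lemma spectrum_dg (T S : H →L[ℂ] H) :
    spectrum ℂ (dg T S) = spectrum ℂ T ∪ spectrum ℂ S := by
  ext z
  simp only [spectrum.mem_iff, Set.mem_union, dg_algebraMap, dg_sub, isUnit_dg_iff, not_and_or]

lemma isStarNormal_dg (T S : H →L[ℂ] H) (hT : IsStarNormal T) (hS : IsStarNormal S) :
    IsStarNormal (dg T S) := by
  constructor
  rw [commute_iff_eq, dg_star, dg_mul, dg_mul, hT.star_comm_self.eq, hS.star_comm_self.eq]
lemma dg_zero : dg (0 : H →L[ℂ] H) 0 = 0 := by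
  ext x : 1
  exact wlp_ext (by simp [dg_fst, zero_apply]) (by simp [dg_snd, zero_apply])

lemma dg_add (T S T' S' : H →L[ℂ] H) : dg T S + dg T' S' = dg (T + T') (S + S') := by
  ext x : 1
  exact wlp_ext (by simp [add_apply, dg_fst, dg_snd]) (by simp [add_apply, dg_fst, dg_snd])

def dgSAH : ((H →L[ℂ] H) × (H →L[ℂ] H)) →⋆ₐ[ℂ] ((WithLp 2 (H × H)) →L[ℂ] (WithLp 2 (H × H))) where
  toFun p := dg p.1 p.2
  map_one' := dg_one
  map_mul' p q := by rw [dg_mul]; rfl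
  map_zero' := dg_zero
  map_add' p q := by rw [dg_add]; rfl
  commutes' z := by rw [dg_algebraMap]; rfl
  map_star' p := by rw [dg_star, Prod.fst_star, Prod.snd_star]

set_option maxHeartbeats 8000000 in
lemma cfc_dg (N₁ N₂ : H →L[ℂ] H) (hN₁ : IsStarNormal N₁) (hN₂ : IsStarNormal N₂)
    (f : ℂ → ℂ) (hf : ContinuousOn f (spectrum ℂ N₁ ∪ spectrum ℂ N₂)) :
    cfc f (dg N₁ N₂) = dg (cfc f N₁) (cfc f N₂) := by
  have hN : IsStarNormal (dg N₁ N₂) := isStarNormal_dg _ _ hN₁ hN₂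
  have hspec := spectrum_dg N₁ N₂
  have h1 : spectrum ℂ N₁ ⊆ spectrum ℂ (dg N₁ N₂) := by rw [hspec]; exact Set.subset_union_left
  have h2 : spectrum ℂ N₂ ⊆ spectrum ℂ (dg N₁ N₂) := by rw [hspec]; exact Set.subset_union_right
  let ι₁ : C(spectrum ℂ N₁, spectrum ℂ (dg N₁ N₂)) :=
    ⟨Set.inclusion h1, continuous_id.subtype_map h1⟩
  let ι₂ : C(spectrum ℂ N₂, spectrum ℂ (dg N₁ N₂)) :=
    ⟨Set.inclusion h2, continuous_id.subtype_map h2⟩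
  let φ₁ : C(spectrum ℂ (dg N₁ N₂), ℂ) →⋆ₐ[ℂ] (H →L[ℂ] H) :=
    (cfcHom hN₁).comp (ContinuousMap.compStarAlgHom' ℂ ℂ ι₁)
  let φ₂ : C(spectrum ℂ (dg N₁ N₂), ℂ) →⋆ₐ[ℂ] (H →L[ℂ] H) :=
    (cfcHom hN₂).comp (ContinuousMap.compStarAlgHom' ℂ ℂ ι₂)
  let ψ : C(spectrum ℂ (dg N₁ N₂), ℂ) →⋆ₐ[ℂ] ((WithLp 2 (H × H)) →L[ℂ] (WithLp 2 (H × H))) :=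
    dgSAH.comp (φ₁.prod φ₂)
  have hφ₁c : Continuous φ₁ := by
    show Continuous ((cfcHom hN₁).comp (ContinuousMap.compStarAlgHom' ℂ ℂ ι₁))
    rw [StarAlgHom.coe_comp]
    exact (cfcHom_isClosedEmbedding hN₁).continuous.comp (ContinuousMap.continuous_precomp ι₁)
  have hφ₂c : Continuous φ₂ := by
    show Continuous ((cfcHom hN₂).comp (ContinuousMap.compStarAlgHom' ℂ ℂ ι₂))
    rw [StarAlgHom.coe_comp]
    exact (cfcHom_isClosedEmbedding hN₂).continuous.comp (ContinuousMap.continuous_precomp ι₂)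
  have hd : Continuous fun p : (H →L[ℂ] H) × (H →L[ℂ] H) => dg p.1 p.2 := by
    have heq : (fun p : (H →L[ℂ] H) × (H →L[ℂ] H) => dg p.1 p.2) =
        fun p => (eL.symm.toContinuousLinearMap).comp
          ((ContinuousLinearMap.prodMapL ℂ H H H H p).comp eL.toContinuousLinearMap) := by
      funext p; rw [ContinuousLinearMap.prodMapL_apply]; rfl
    rw [heq]
    exact continuous_const.clm_comp
      (((ContinuousLinearMap.prodMapL ℂ H H H H).continuous).clm_comp continuous_const)
  have hcont : Continuous ψ := by
    show Continuous (dgSAH.comp (φ₁.prod φ₂))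
    rw [StarAlgHom.coe_comp]
    refine Continuous.comp ?_ ?_
    · exact hd
    · have hco : ⇑(φ₁.prod φ₂) = fun g => (φ₁ g, φ₂ g) := rfl
      rw [hco]
      exact hφ₁c.prodMk hφ₂c
  have hψ_app : ∀ g : C(spectrum ℂ (dg N₁ N₂), ℂ),
      ψ g = dg (cfcHom hN₁ (g.comp ι₁)) (cfcHom hN₂ (g.comp ι₂)) := fun g => rfl
  have hψid : ψ (ContinuousMap.restrict (spectrum ℂ (dg N₁ N₂)) (ContinuousMap.id ℂ)) =
      dg N₁ N₂ := by
    rw [hψ_app]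
    have hc₁ : (ContinuousMap.restrict (spectrum ℂ (dg N₁ N₂)) (ContinuousMap.id ℂ)).comp ι₁ =
        ContinuousMap.restrict (spectrum ℂ N₁) (ContinuousMap.id ℂ) := by ext x; rfl
    have hc₂ : (ContinuousMap.restrict (spectrum ℂ (dg N₁ N₂)) (ContinuousMap.id ℂ)).comp ι₂ =
        ContinuousMap.restrict (spectrum ℂ N₂) (ContinuousMap.id ℂ) := by ext x; rfl
    rw [hc₁, hc₂, cfcHom_id, cfcHom_id]
  have hkey := cfcHom_eq_of_continuous_of_map_id hN ψ hcont hψid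
  have hf' : ContinuousOn f (spectrum ℂ (dg N₁ N₂)) := by rw [hspec]; exact hf
  have hfr₁ : ContinuousOn f (spectrum ℂ N₁) := hf.mono Set.subset_union_left
  have hfr₂ : ContinuousOn f (spectrum ℂ N₂) := hf.mono Set.subset_union_right
  rw [cfc_apply f (dg N₁ N₂) hN hf', hkey, hψ_app,
    cfc_apply f N₁ hN₁ hfr₁, cfc_apply f N₂ hN₂ hfr₂]
  refine congrArg₂ dg ?_ ?_
  · exact DFunLike.congr_arg (cfcHom hN₁) (by ext x; rfl)
  · exact DFunLike.congr_arg (cfcHom hN₂) (by ext x; rfl)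


def offd (R : H →L[ℂ] H) : (WithLp 2 (H × H)) →L[ℂ] (WithLp 2 (H × H)) :=
  (eL.symm.toContinuousLinearMap).comp
    (((R.comp (ContinuousLinearMap.snd ℂ H H)).prod 0).comp eL.toContinuousLinearMap)

lemma offd_fst (R : H →L[ℂ] H) (x : WithLp 2 (H × H)) : (offd R x).fst = R x.snd := by
  simp [offd, eL]

lemma offd_snd (R : H →L[ℂ] H) (x : WithLp 2 (H × H)) : (offd R x).snd = 0 := by
  simp [offd, eL]

lemma wlp_norm_sq (x : WithLp 2 (H × H)) : ‖x‖ ^ 2 = ‖x.fst‖ ^ 2 + ‖x.snd‖ ^ 2 :=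
  WithLp.prod_norm_sq_eq_of_L2 x

lemma wlp_norm_fst (x : WithLp 2 (H × H)) (h : x.snd = 0) : ‖x‖ = ‖x.fst‖ := by
  have := wlp_norm_sq x
  rw [h] at this
  simp at this
  nlinarith [norm_nonneg x, norm_nonneg x.fst]

lemma wlp_snd_le (x : WithLp 2 (H × H)) : ‖x.snd‖ ≤ ‖x‖ := by
  have := wlp_norm_sq x
  nlinarith [norm_nonneg x, norm_nonneg x.fst, norm_nonneg x.snd]

lemma offd_norm (R : H →L[ℂ] H) : ‖offd R‖ = ‖R‖ := by
  apply le_antisymm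
  · apply ContinuousLinearMap.opNorm_le_bound _ (norm_nonneg R)
    intro x
    rw [wlp_norm_fst _ (offd_snd R x), offd_fst]
    calc ‖R x.snd‖ ≤ ‖R‖ * ‖x.snd‖ := R.le_opNorm x.snd
    _ ≤ ‖R‖ * ‖x‖ := mul_le_mul_of_nonneg_left (wlp_snd_le x) (norm_nonneg R)
  · apply ContinuousLinearMap.opNorm_le_bound _ (norm_nonneg (offd R))
    intro y
    set x : WithLp 2 (H × H) := (WithLp.equiv 2 (H × H)).symm (0, y) with hx
    have hfst : x.fst = 0 := rfl
    have hsnd : x.snd = y := rfl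
    have hxnorm : ‖x‖ = ‖y‖ := by
      have := wlp_norm_sq x
      rw [hfst, hsnd] at this
      simp at this
      nlinarith [norm_nonneg x, norm_nonneg y]
    have h1 : ‖offd R x‖ = ‖R y‖ := by
      rw [wlp_norm_fst _ (offd_snd R x), offd_fst, hsnd]
    calc ‖R y‖ = ‖offd R x‖ := h1.symm
    _ ≤ ‖offd R‖ * ‖x‖ := (offd R).le_opNorm x
    _ = ‖offd R‖ * ‖y‖ := by rw [hxnorm]

lemma dg_mul_offd (T S R : H →L[ℂ] H) : dg T S * offd R = offd (T * R) := by
  ext x : 1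
  refine wlp_ext ?_ ?_
  · simp [ContinuousLinearMap.mul_apply, dg_fst, offd_fst]
  · simp [ContinuousLinearMap.mul_apply, dg_snd, offd_snd]

lemma offd_mul_dg (T S R : H →L[ℂ] H) : offd R * dg T S = offd (R * S) := by
  ext x : 1
  refine wlp_ext ?_ ?_
  · simp [ContinuousLinearMap.mul_apply, dg_snd, offd_fst]
  · simp [ContinuousLinearMap.mul_apply, offd_snd]

lemma offd_sub (R R' : H →L[ℂ] H) : offd R - offd R' = offd (R - R') := by
  ext x : 1
  refine wlp_ext ?_ ?_
  · simp [ContinuousLinearMap.sub_apply, offd_fst]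
  · simp [ContinuousLinearMap.sub_apply, offd_snd]

end Aux

set_option maxHeartbeats 8000000 in
/-- Theorem 3.2 (Theorem `sr0`): for a continuous function `f` on a closed subset `F` of `ℂ`,
the commutator estimate for a single normal operator is equivalent to the
quasicommutator estimate for pairs of normal operators. -/
theorem stmt_1 (F : Set ℂ) (hF : IsClosed F) (f : ℂ → ℂ) (hf : ContinuousOn f F) :
    (∀ (H : Type) [NormedAddCommGroup H] [InnerProductSpace ℂ H] [CompleteSpace H]
      (N R : H →L[ℂ] H), IsStarNormal N → spectrum ℂ N ⊆ F →
      ‖cfc f N * R - R * cfc f N‖ ≤ ‖N * R - R * N‖)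
    ↔
    (∀ (H : Type) [NormedAddCommGroup H] [InnerProductSpace ℂ H] [CompleteSpace H]
      (N₁ N₂ R : H →L[ℂ] H), IsStarNormal N₁ → IsStarNormal N₂ →
      spectrum ℂ N₁ ⊆ F → spectrum ℂ N₂ ⊆ F →
      ‖cfc f N₁ * R - R * cfc f N₂‖ ≤ ‖N₁ * R - R * N₂‖) := by
  constructor
  · intro h H _ _ _ N₁ N₂ R hN₁ hN₂ hs₁ hs₂
    have hsu : spectrum ℂ N₁ ∪ spectrum ℂ N₂ ⊆ F := Set.union_subset hs₁ hs₂
    have hspec : spectrum ℂ (dg N₁ N₂) ⊆ F := by rw [spectrum_dg]; exact hsu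
    have key := h (WithLp 2 (H × H)) (dg N₁ N₂) (offd R)
      (isStarNormal_dg _ _ hN₁ hN₂) hspec
    rw [cfc_dg N₁ N₂ hN₁ hN₂ f (hf.mono hsu), dg_mul_offd, offd_mul_dg, offd_sub,
      dg_mul_offd, offd_mul_dg, offd_sub, offd_norm, offd_norm] at key
    exact key
  · intro h H _ _ _ N R hN hs
    exact h H N N R hN hN hs hs
end

section
/- For n ∈ ℤ define h_n : ℂ → ℂ by h_n(ζ) = ζ^{n+1}/ζ̄^n for ζ ≠ 0 and h_n(0) = 0. Then: (a) ‖h_n(N₁) − h_n(N₂)‖ ≤ |2n+1|·‖N₁ − N₂‖ for all bounded normal operators N₁, N₂ on any complex Hilbert space; (b) the best Lipschitz constant of h_n on ℂ equals |2n+1|, i.e., |h_n(ζ₁) − h_n(ζ₂)| ≤ |2n+1|·|ζ₁ − ζ₂| for all ζ₁, ζ₂ ∈ ℂ and no smaller constant works; (c) if n ∉ {0, −1}, then h_n is not (real-)differentiable at the origin as a map from ℝ² ≅ ℂ to ℂ. -/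
open Complex


open scoped ComplexConjugate

/-- The function `h_n(ζ) = ζ^{n+1} / ζ̄^n` (with `h_n(0) = 0`). -/
noncomputable def hFun (n : ℤ) (ζ : ℂ) : ℂ :=
  if ζ = 0 then 0 else ζ ^ (n + 1) / (conj ζ) ^ n

lemma hFun_zero (n : ℤ) : hFun n 0 = 0 := if_pos rfl

lemma hFun_apply (n : ℤ) {ζ : ℂ} (h : ζ ≠ 0) : hFun n ζ = ζ ^ (n + 1) / (conj ζ) ^ n :=
  if_neg h

lemma abs_hFun (n : ℤ) (ζ : ℂ) : ‖hFun n ζ‖ = ‖ζ‖ := by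
  by_cases h : ζ = 0
  · simp [h, hFun_zero]
  · have h' : ‖ζ‖ ≠ 0 := by simpa using h
    rw [hFun_apply n h, norm_div, norm_zpow, norm_zpow, Complex.norm_conj,
      zpow_add₀ h', zpow_one]
    field_simp

lemma hFun_neg (m : ℤ) (ζ : ℂ) : hFun (-m-1) ζ = conj (hFun m ζ) := by
  by_cases h : ζ = 0
  · simp [h, hFun_zero]
  · have hc : conj ζ ≠ 0 := by simpa using h
    rw [hFun_apply _ h, hFun_apply _ h, map_div₀, map_zpow₀, map_zpow₀, Complex.conj_conj]
    rw [div_eq_div_iff (zpow_ne_zero _ hc) (zpow_ne_zero _ h)]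
    · rw [← zpow_add₀ hc, ← zpow_add₀ h]
      ring_nf
      simp

lemma normConj (z : ℂ) : ‖conj z‖ = ‖z‖ := by
  rw [← Complex.star_def]; exact norm_star z

lemma absP (m : ℕ) : ∀ a b : ℂ,
    ‖a ^ (m+1) * (conj b) ^ m - b ^ (m+1) * (conj a) ^ m‖ ≤
      (2 * m + 1) * ‖a - b‖ * ‖a‖ ^ m * ‖b‖ ^ m := by
  induction m with
  | zero => intro a b; simp
  | succ m ih =>
    have key : ∀ a b : ℂ, ‖b‖ ≤ ‖a‖ →
        ‖a ^ (m+2) * (conj b) ^ (m+1) - b ^ (m+2) * (conj a) ^ (m+1)‖ ≤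
        (2 * (m:ℝ) + 3) * ‖a - b‖ * ‖a‖ ^ (m+1) * ‖b‖ ^ (m+1) := by
      intro a b hba
      have hid : a ^ (m+2) * (conj b) ^ (m+1) - b ^ (m+2) * (conj a) ^ (m+1)
          = a * conj b * (a ^ (m+1) * (conj b) ^ m - b ^ (m+1) * (conj a) ^ m)
            + (conj a) ^ m * b ^ (m+1) * (a * conj b - conj a * b) := by
        ring
      have hab2 : ‖a * conj b - conj a * b‖ ≤ 2 * ‖b‖ * ‖a - b‖ := by
        have e : a * conj b - conj a * b = conj b * (a - b) - b * conj (a - b) := by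
          rw [map_sub]; ring
        calc ‖a * conj b - conj a * b‖ ≤ ‖conj b * (a - b)‖ + ‖b * conj (a - b)‖ := by
              rw [e]; exact norm_sub_le _ _
          _ = 2 * ‖b‖ * ‖a - b‖ := by
              rw [norm_mul, norm_mul, normConj, normConj]; ring
      have hnorm : ‖a ^ (m+2) * (conj b) ^ (m+1) - b ^ (m+2) * (conj a) ^ (m+1)‖
          ≤ ‖a‖ * ‖b‖ * ‖a ^ (m+1) * (conj b) ^ m - b ^ (m+1) * (conj a) ^ m‖
            + ‖a‖ ^ m * ‖b‖ ^ (m+1) * ‖a * conj b - conj a * b‖ := by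
        rw [hid]
        refine (norm_add_le _ _).trans (le_of_eq ?_)
        rw [norm_mul, norm_mul, norm_mul, norm_mul, norm_pow, norm_pow,
          normConj, normConj]
      set x := ‖a‖ with hx
      set y := ‖b‖ with hy
      set d := ‖a - b‖ with hd
      have hx0 : 0 ≤ x := norm_nonneg _
      have hy0 : 0 ≤ y := norm_nonneg _
      have hd0 : 0 ≤ d := norm_nonneg _
      have t1 : x * y * ‖a ^ (m+1) * (conj b) ^ m - b ^ (m+1) * (conj a) ^ m‖
          ≤ (2 * m + 1) * d * x ^ (m+1) * y ^ (m+1) := by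
        calc x * y * ‖a ^ (m+1) * (conj b) ^ m - b ^ (m+1) * (conj a) ^ m‖
            ≤ x * y * ((2 * m + 1) * d * x ^ m * y ^ m) := by
              exact mul_le_mul_of_nonneg_left (ih a b) (by positivity)
          _ = (2 * m + 1) * d * x ^ (m+1) * y ^ (m+1) := by ring
      have t2 : x ^ m * y ^ (m+1) * ‖a * conj b - conj a * b‖
          ≤ 2 * d * x ^ m * y ^ (m+2) := by
        calc x ^ m * y ^ (m+1) * ‖a * conj b - conj a * b‖
            ≤ x ^ m * y ^ (m+1) * (2 * y * d) :=
              mul_le_mul_of_nonneg_left hab2 (by positivity)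
          _ = 2 * d * x ^ m * y ^ (m+2) := by ring
      have t3 : 2 * d * x ^ m * y ^ (m+2) ≤ 2 * d * x ^ (m+1) * y ^ (m+1) := by
        have : y ^ (m + 2) = y * y ^ (m+1) := by ring
        rw [this]
        have h' : y * y ^ (m+1) ≤ x * y ^ (m+1) :=
          mul_le_mul_of_nonneg_right hba (by positivity)
        calc 2 * d * x ^ m * (y * y ^ (m+1)) ≤ 2 * d * x ^ m * (x * y ^ (m+1)) := by
              exact mul_le_mul_of_nonneg_left h' (by positivity)
          _ = 2 * d * x ^ (m+1) * y ^ (m+1) := by ring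
      calc ‖a ^ (m+2) * (conj b) ^ (m+1) - b ^ (m+2) * (conj a) ^ (m+1)‖
          ≤ x * y * ‖a ^ (m+1) * (conj b) ^ m - b ^ (m+1) * (conj a) ^ m‖
            + x ^ m * y ^ (m+1) * ‖a * conj b - conj a * b‖ := hnorm
        _ ≤ (2 * m + 1) * d * x ^ (m+1) * y ^ (m+1) + 2 * d * x ^ (m+1) * y ^ (m+1) := by
            linarith [t2.trans t3]
        _ = (2 * (m:ℝ) + 3) * d * x ^ (m+1) * y ^ (m+1) := by ring
    intro a b
    have hconst : (2 * ((m:ℝ)+1) + 1) = 2 * (m:ℝ) + 3 := by ring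
    have hgoal : ∀ a b : ℂ, ‖b‖ ≤ ‖a‖ →
        ‖a ^ (m+1+1) * (conj b) ^ (m+1) - b ^ (m+1+1) * (conj a) ^ (m+1)‖ ≤
        (2 * ((m+1:ℕ):ℝ) + 1) * ‖a - b‖ * ‖a‖ ^ (m+1) * ‖b‖ ^ (m+1) := by
      intro a b hba
      push_cast
      rw [hconst]
      exact key a b hba
    rcases le_total ‖b‖ ‖a‖ with hba | hab
    · exact hgoal a b hba
    · have := hgoal b a hab
      have e : ‖b ^ (m+1+1) * (conj a) ^ (m+1) - a ^ (m+1+1) * (conj b) ^ (m+1)‖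
          = ‖a ^ (m+1+1) * (conj b) ^ (m+1) - b ^ (m+1+1) * (conj a) ^ (m+1)‖ := by
        rw [← norm_neg]; ring_nf
      have e2 : ‖b - a‖ = ‖a - b‖ := norm_sub_rev _ _
      rw [e, e2] at this
      calc ‖a ^ (m+1+1) * (conj b) ^ (m+1) - b ^ (m+1+1) * (conj a) ^ (m+1)‖
          ≤ (2 * ((m+1:ℕ):ℝ) + 1) * ‖a - b‖ * ‖b‖ ^ (m+1) * ‖a‖ ^ (m+1) := this
        _ = (2 * ((m+1:ℕ):ℝ) + 1) * ‖a - b‖ * ‖a‖ ^ (m+1) * ‖b‖ ^ (m+1) := by ring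

lemma norm_hFun (n : ℤ) (ζ : ℂ) : ‖hFun n ζ‖ = ‖ζ‖ := by
  rw [abs_hFun]

lemma hFun_natCast {m : ℕ} {ζ : ℂ} (h : ζ ≠ 0) :
    hFun (m:ℤ) ζ = ζ ^ (m+1) / (conj ζ) ^ m := by
  rw [hFun_apply _ h, show ((m:ℤ)+1) = ((m+1:ℕ):ℤ) by push_cast; ring,
    zpow_natCast, zpow_natCast]

lemma scalar_nat (m : ℕ) (ζ₁ ζ₂ : ℂ) :
    ‖hFun (m:ℤ) ζ₁ - hFun (m:ℤ) ζ₂‖ ≤ (2 * (m:ℝ) + 1) * ‖ζ₁ - ζ₂‖ := by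
  have hm : (1:ℝ) ≤ 2 * (m:ℝ) + 1 := by
    have : (0:ℝ) ≤ (m:ℝ) := Nat.cast_nonneg m
    linarith
  by_cases h1 : ζ₁ = 0
  · by_cases h2 : ζ₂ = 0
    · simp [h1, h2, hFun_zero]
    · rw [h1, hFun_zero, zero_sub, norm_neg, norm_hFun]
      calc ‖ζ₂‖ = 1 * ‖ζ₂‖ := (one_mul _).symm
        _ ≤ (2 * (m:ℝ) + 1) * ‖ζ₂‖ := by
            apply mul_le_mul_of_nonneg_right hm (norm_nonneg _)
        _ = (2 * (m:ℝ) + 1) * ‖(0:ℂ) - ζ₂‖ := by rw [zero_sub, norm_neg]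
  · by_cases h2 : ζ₂ = 0
    · rw [h2, hFun_zero, sub_zero, norm_hFun]
      calc ‖ζ₁‖ = 1 * ‖ζ₁‖ := (one_mul _).symm
        _ ≤ (2 * (m:ℝ) + 1) * ‖ζ₁‖ := by
            apply mul_le_mul_of_nonneg_right hm (norm_nonneg _)
        _ = (2 * (m:ℝ) + 1) * ‖ζ₁ - 0‖ := by rw [sub_zero]
    · have hc1 : conj ζ₁ ≠ 0 := by simpa using h1
      have hc2 : conj ζ₂ ≠ 0 := by simpa using h2
      have e : hFun (m:ℤ) ζ₁ - hFun (m:ℤ) ζ₂ =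
          (ζ₁ ^ (m+1) * (conj ζ₂) ^ m - ζ₂ ^ (m+1) * (conj ζ₁) ^ m) /
            ((conj ζ₁) ^ m * (conj ζ₂) ^ m) := by
        rw [hFun_natCast h1, hFun_natCast h2]
        field_simp
      rw [e, norm_div, norm_mul, norm_pow, norm_pow, normConj, normConj]
      have hp : (0:ℝ) < ‖ζ₁‖ ^ m * ‖ζ₂‖ ^ m := by
        have := norm_pos_iff.mpr h1
        have := norm_pos_iff.mpr h2
        positivity
      rw [div_le_iff₀ hp]
      calc ‖ζ₁ ^ (m+1) * (conj ζ₂) ^ m - ζ₂ ^ (m+1) * (conj ζ₁) ^ m‖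
          ≤ (2 * (m:ℝ) + 1) * ‖ζ₁ - ζ₂‖ * ‖ζ₁‖ ^ m * ‖ζ₂‖ ^ m := absP m ζ₁ ζ₂
        _ = (2 * (m:ℝ) + 1) * ‖ζ₁ - ζ₂‖ * (‖ζ₁‖ ^ m * ‖ζ₂‖ ^ m) := by ring

lemma neg_int_form {n : ℤ} (h : n < 0) : n = -(((-n-1).toNat : ℤ)) - 1 := by
  have := Int.toNat_of_nonneg (by omega : (0:ℤ) ≤ -n-1)
  omega

lemma scalar_int (n : ℤ) (ζ₁ ζ₂ : ℂ) :
    ‖hFun n ζ₁ - hFun n ζ₂‖ ≤ |2 * (n:ℝ) + 1| * ‖ζ₁ - ζ₂‖ := by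
  rcases le_or_gt 0 n with hn | hn
  · obtain ⟨m, rfl⟩ := Int.eq_ofNat_of_zero_le hn
    have : |2 * ((m:ℤ):ℝ) + 1| = 2 * (m:ℝ) + 1 := by
      push_cast; rw [_root_.abs_of_nonneg (by positivity)]
    rw [this]
    exact_mod_cast scalar_nat m ζ₁ ζ₂
  · set m := (-n-1).toNat with hm
    have hn' : n = -(m:ℤ) - 1 := neg_int_form hn
    have habs : |2 * ((n:ℤ):ℝ) + 1| = 2 * (m:ℝ) + 1 := by
      rw [hn']
      push_cast
      rw [show (2 * (-(m:ℝ)-1) + 1) = -(2 * (m:ℝ) + 1) by ring, abs_neg,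
        _root_.abs_of_nonneg (by positivity)]
    rw [habs, hn', hFun_neg, hFun_neg, ← map_sub, normConj]
    exact scalar_nat m ζ₁ ζ₂

lemma hFun_continuous (n : ℤ) : Continuous (hFun n) := by
  rw [continuous_iff_continuousAt]
  intro ζ₀
  by_cases h : ζ₀ = 0
  · subst h
    have h0 : hFun n 0 = 0 := hFun_zero n
    rw [ContinuousAt, h0]
    apply squeeze_zero_norm (fun ζ => (norm_hFun n ζ).le)
    simpa using (continuous_norm.tendsto (0:ℂ))
  · have hconj : conj ζ₀ ≠ 0 := by simpa using h
    have hcont : ContinuousAt (fun ζ : ℂ => ζ ^ (n+1) / (conj ζ) ^ n) ζ₀ := by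
      apply ContinuousAt.div
      · exact continuousAt_zpow₀ _ _ (Or.inl h)
      · exact (continuousAt_zpow₀ _ _ (Or.inl hconj)).comp
          (Complex.continuous_conj.continuousAt)
      · exact zpow_ne_zero _ hconj
    apply hcont.congr
    filter_upwards [isOpen_compl_singleton.mem_nhds h] with ζ hζ
    exact (hFun_apply n hζ).symm

lemma hFun_exp (n : ℤ) (t : ℝ) :
    hFun n (Complex.exp (t * Complex.I)) =
      Complex.exp (((2*n+1 : ℤ) : ℂ) * (t * Complex.I)) := by
  have hz : Complex.exp ((t:ℂ) * Complex.I) ≠ 0 := Complex.exp_ne_zero _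
  rw [hFun_apply n hz]
  have hconj : conj (Complex.exp ((t:ℂ) * Complex.I)) =
      Complex.exp (-((t:ℂ) * Complex.I)) := by
    rw [← Complex.exp_conj, map_mul, Complex.conj_ofReal, Complex.conj_I, mul_neg]
  rw [hconj, ← Complex.exp_int_mul, ← Complex.exp_int_mul, ← Complex.exp_sub]
  congr 1
  push_cast
  ring

lemma hFun_one (n : ℤ) : hFun n 1 = 1 := by
  rw [hFun_apply n one_ne_zero, map_one, one_zpow, one_zpow]
  norm_num

lemma sharp_int (n : ℤ) (C : ℝ)
    (h : ∀ ζ₁ ζ₂ : ℂ, ‖hFun n ζ₁ - hFun n ζ₂‖ ≤ C * ‖ζ₁ - ζ₂‖) :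
    |2 * (n:ℝ) + 1| ≤ C := by
  set m : ℤ := 2 * n + 1 with hm
  set g : ℝ → ℂ := fun t => Complex.exp ((m:ℂ) * ((t:ℂ) * Complex.I)) with hgdef
  set f : ℝ → ℂ := fun t => Complex.exp ((t:ℂ) * Complex.I) with hfdef
  have hof : HasDerivAt (fun t : ℝ => ((t:ℂ) * Complex.I)) Complex.I 0 := by
    simpa using (Complex.ofRealCLM.hasDerivAt (x := (0:ℝ))).mul_const Complex.I
  have hg : HasDerivAt g ((m:ℂ) * Complex.I) 0 := by
    have h1 : HasDerivAt (fun t : ℝ => ((m:ℂ) * ((t:ℂ) * Complex.I)))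
        ((m:ℂ) * Complex.I) 0 := by
      simpa using hof.const_mul (m:ℂ)
    simpa using h1.cexp
  have hf : HasDerivAt f Complex.I 0 := by simpa using hof.cexp
  have T1 : Filter.Tendsto (fun t => ‖slope g 0 t‖) (nhdsWithin 0 {(0:ℝ)}ᶜ)
      (nhds ‖(m:ℂ) * Complex.I‖) :=
    (continuous_norm.tendsto _).comp (hasDerivAt_iff_tendsto_slope.mp hg)
  have T2 : Filter.Tendsto (fun t => C * ‖slope f 0 t‖) (nhdsWithin 0 {(0:ℝ)}ᶜ)
      (nhds (C * ‖Complex.I‖)) :=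
    ((continuous_norm.tendsto _).comp (hasDerivAt_iff_tendsto_slope.mp hf)).const_mul C
  have hineq : ∀ t : ℝ, t ≠ 0 → ‖slope g 0 t‖ ≤ C * ‖slope f 0 t‖ := by
    intro t ht
    have e1 : g t - g 0 = hFun n (f t) - hFun n 1 := by
      rw [hgdef, hfdef]
      simp only []
      rw [hFun_exp n t, hFun_one]
      norm_num
      congr 1
      push_cast [hm]
      ring
    have key : ‖g t - g 0‖ ≤ C * ‖f t - f 0‖ := by
      rw [e1]
      have := h (f t) 1
      simpa [hfdef] using this
    rw [slope_def_module, slope_def_module, sub_zero, norm_smul, norm_smul]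
    have h0 : (0:ℝ) ≤ ‖(t:ℝ)⁻¹‖ := norm_nonneg _
    calc ‖t⁻¹‖ * ‖g t - g 0‖ ≤ ‖t⁻¹‖ * (C * ‖f t - f 0‖) :=
          mul_le_mul_of_nonneg_left key h0
      _ = C * (‖t⁻¹‖ * ‖f t - f 0‖) := by ring
  have hle : ‖(m:ℂ) * Complex.I‖ ≤ C * ‖Complex.I‖ := by
    refine le_of_tendsto_of_tendsto T1 T2 ?_
    filter_upwards [self_mem_nhdsWithin] with t ht
    exact hineq t ht
  have : ‖(m:ℂ) * Complex.I‖ = |2 * (n:ℝ) + 1| := by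
    rw [norm_mul, Complex.norm_I, mul_one]
    rw [show ((m:ℤ):ℂ) = ((((m:ℤ):ℝ)):ℂ) by push_cast; ring]
    rw [Complex.norm_real, Real.norm_eq_abs]
    congr 1
    push_cast [hm]
    ring
  rw [this, Complex.norm_I, mul_one] at hle
  exact hle

lemma hFun_real_smul (n : ℤ) (t : ℝ) (ζ : ℂ) : hFun n (t • ζ) = t • hFun n ζ := by
  by_cases ht : (t:ℂ) = 0
  · have ht' : t = 0 := by exact_mod_cast ht
    simp [ht', hFun_zero]
  · by_cases hζ : ζ = 0
    · simp [hζ, hFun_zero]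
    · have hmul : (t:ℂ) * ζ ≠ 0 := mul_ne_zero ht hζ
      rw [Complex.real_smul, Complex.real_smul, hFun_apply n hmul, hFun_apply n hζ]
      rw [map_mul, Complex.conj_ofReal, mul_zpow, mul_zpow, zpow_add_one₀ ht]
      rw [show (t:ℂ) ^ n * (t:ℂ) * ζ ^ (n+1) = (t:ℂ) ^ n * ((t:ℂ) * ζ ^ (n+1)) by ring]
      rw [mul_div_mul_left _ _ (zpow_ne_zero n ht), mul_div_assoc]

lemma hFun_I_re (n : ℤ) : (hFun n Complex.I).re = 0 := by
  have hI : Complex.I ≠ 0 := Complex.I_ne_zero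
  rw [hFun_apply n hI, Complex.conj_I, show (-Complex.I) = (-1) * Complex.I by ring,
    mul_zpow, zpow_add_one₀ hI, mul_comm (Complex.I ^ n) Complex.I,
    mul_div_mul_right _ _ (zpow_ne_zero n hI)]
  rcases Int.even_or_odd n with he | ho
  · rw [he.neg_one_zpow, div_one, Complex.I_re]
  · rw [ho.neg_one_zpow, div_neg, div_one, Complex.neg_re, Complex.I_re, neg_zero]

lemma not_diff (n : ℤ) (h0 : n ≠ 0) (h1 : n ≠ -1) : ¬ DifferentiableAt ℝ (hFun n) 0 := by
  intro hd
  have hL := hd.hasFDerivAt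
  set L := fderiv ℝ (hFun n) 0 with hLdef
  have hline : ∀ ζ : ℂ, L ζ = hFun n ζ := by
    intro ζ
    have hsm : HasDerivAt (fun t : ℝ => t • ζ) ζ 0 := by
      simpa using (hasDerivAt_id (0:ℝ)).smul_const ζ
    have hL' : HasFDerivAt (hFun n) L ((fun t : ℝ => t • ζ) 0) := by
      simpa using hL
    have hcomp : HasDerivAt (fun t : ℝ => hFun n (t • ζ)) (L ζ) 0 :=
      by have := hL'.comp_hasDerivAt 0 hsm; exact this
    have h2' : HasDerivAt (fun t : ℝ => hFun n (t • ζ)) (hFun n ζ) 0 := by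
      have e : (fun t : ℝ => hFun n (t • ζ)) = fun t : ℝ => t • hFun n ζ :=
        funext (fun t => hFun_real_smul n t ζ)
      rw [e]
      simpa using (hasDerivAt_id (0:ℝ)).smul_const (hFun n ζ)
    exact hcomp.unique h2'
  set m : ℤ := 2 * n + 1 with hm
  have hmne : m ≠ 0 := by omega
  have hmR : (m:ℝ) ≠ 0 := Int.cast_ne_zero.mpr hmne
  have hm3 : 3 ≤ |(m:ℝ)| := by
    have h3 : (3:ℤ) ≤ |m| := by
      rcases le_or_gt 1 n with h | h
      · rw [hm, abs_of_nonneg (by omega : (0:ℤ) ≤ 2*n+1)]; omega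
      · rw [hm, abs_of_nonpos (by omega : (2*n+1:ℤ) ≤ 0)]; omega
    calc (3:ℝ) = ((3:ℤ):ℝ) := by norm_num
      _ ≤ ((|m|:ℤ):ℝ) := by exact_mod_cast h3
      _ = |(m:ℝ)| := by push_cast; ring
  have hπ := Real.pi_pos
  set θ : ℝ := Real.pi / (2 * (m:ℝ)) with hθ
  have hθabs : |θ| ≤ Real.pi / 6 := by
    have h6 : (6:ℝ) ≤ 2 * |(m:ℝ)| := by linarith
    calc |θ| = Real.pi / (2 * |(m:ℝ)|) := by
          rw [hθ, abs_div, abs_of_pos hπ, abs_mul, _root_.abs_two]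
      _ ≤ Real.pi / 6 :=
          div_le_div_of_nonneg_left hπ.le (by norm_num) h6
  have hθlt : -(Real.pi/2) < θ ∧ θ < Real.pi/2 := by
    have := abs_lt.mp (lt_of_le_of_lt hθabs (by linarith : Real.pi/6 < Real.pi/2))
    exact ⟨this.1, this.2⟩
  have hcos : 0 < Real.cos θ := Real.cos_pos_of_mem_Ioo ⟨hθlt.1, hθlt.2⟩
  have hmθ : (m:ℝ) * θ = Real.pi/2 := by rw [hθ]; field_simp
  have hζI : hFun n (Complex.exp ((θ:ℂ) * Complex.I)) = Complex.I := by
    rw [hFun_exp n θ]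
    have e : ((2*n+1:ℤ):ℂ) * ((θ:ℂ)*Complex.I) = ((Real.pi/2:ℝ):ℂ) * Complex.I := by
      calc ((2*n+1:ℤ):ℂ) * ((θ:ℂ)*Complex.I) = ((((m:ℝ)*θ : ℝ)):ℂ) * Complex.I := by
            push_cast [hm]; ring
        _ = ((Real.pi/2:ℝ):ℂ) * Complex.I := by rw [hmθ]
    rw [e]
    simp [Complex.exp_mul_I, ← Complex.ofReal_cos, ← Complex.ofReal_sin,
      Real.cos_pi_div_two, Real.sin_pi_div_two]
  set ζ₀ := Complex.exp ((θ:ℂ)*Complex.I) with hζ₀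
  have hdec : ζ₀ = ζ₀.re • (1:ℂ) + ζ₀.im • Complex.I := by
    simp [Complex.real_smul, Complex.re_add_im]
  have hsum : Complex.I = ζ₀.re • (1:ℂ) + ζ₀.im • hFun n Complex.I := by
    have h' : L ζ₀ = ζ₀.re • L 1 + ζ₀.im • L Complex.I := by
      conv_lhs => rw [hdec]
      rw [map_add, map_smul, map_smul]
    rw [hline, hline, hline, hζI, hFun_one] at h'
    exact h'
  have hre := congrArg Complex.re hsum
  rw [Complex.add_re, Complex.smul_re, Complex.smul_re, Complex.one_re, hFun_I_re,
    Complex.I_re] at hre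
  have hζre : ζ₀.re = Real.cos θ := Complex.exp_ofReal_mul_I_re θ
  rw [hζre] at hre
  simp at hre
  linarith

lemma RL (m : ℕ) : ∀ r ε : ℝ, 0 ≤ r → 0 < ε →
    r * ((r^2+ε)^m - (r^2)^m) ≤ m * Real.sqrt ε * (r^2+ε)^m := by
  induction m with
  | zero => intro r ε hr hε; simp
  | succ m ih =>
    intro r ε hr hε
    have hs : Real.sqrt ε ^ 2 = ε := Real.sq_sqrt hε.le
    have hs0 : 0 ≤ Real.sqrt ε := Real.sqrt_nonneg _
    have hsr : Real.sqrt ε * r ≤ r^2 + ε := by nlinarith [sq_nonneg (Real.sqrt ε - r)]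
    have her : ε * r ≤ Real.sqrt ε * (r^2 + ε) := by
      calc ε * r = Real.sqrt ε * (Real.sqrt ε * r) := by nlinarith
        _ ≤ Real.sqrt ε * (r^2 + ε) := by
            apply mul_le_mul_of_nonneg_left hsr hs0
    have hpw : (r^2)^m ≤ (r^2+ε)^m := pow_le_pow_left₀ (by positivity) (by linarith) m
    have hid : r * ((r^2+ε)^(m+1) - (r^2)^(m+1))
        = (r^2+ε) * (r * ((r^2+ε)^m - (r^2)^m)) + (ε * r) * (r^2)^m := by ring
    have h1 : (r^2+ε) * (r * ((r^2+ε)^m - (r^2)^m))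
        ≤ (r^2+ε) * (m * Real.sqrt ε * (r^2+ε)^m) :=
      mul_le_mul_of_nonneg_left (ih r ε hr hε) (by positivity)
    have h2 : (ε * r) * (r^2)^m ≤ (Real.sqrt ε * (r^2+ε)) * (r^2+ε)^m := by
      apply mul_le_mul her hpw (by positivity) (by positivity)
    calc r * ((r^2+ε)^(m+1) - (r^2)^(m+1))
        = (r^2+ε) * (r * ((r^2+ε)^m - (r^2)^m)) + (ε * r) * (r^2)^m := hid
      _ ≤ (r^2+ε) * (m * Real.sqrt ε * (r^2+ε)^m) + (Real.sqrt ε * (r^2+ε)) * (r^2+ε)^m := by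
          linarith
      _ = ((m:ℝ)+1) * Real.sqrt ε * (r^2+ε)^(m+1) := by ring
      _ = ((m+1:ℕ):ℝ) * Real.sqrt ε * (r^2+ε)^(m+1) := by push_cast; ring

noncomputable def aF (ε : ℝ) (ζ : ℂ) : ℂ := ζ^2 / (ζ * conj ζ + (ε:ℂ))
noncomputable def rF (ε : ℝ) (ζ : ℂ) : ℂ := (ε:ℂ) * (ζ / (ζ * conj ζ + (ε:ℂ)))

lemma den_eq (ε : ℝ) (ζ : ℂ) :
    ζ * conj ζ + (ε:ℂ) = ((Complex.normSq ζ + ε : ℝ) : ℂ) := by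
  rw [Complex.mul_conj]; push_cast; ring

lemma den_ne {ε : ℝ} (hε : 0 < ε) (ζ : ℂ) : ζ * conj ζ + (ε:ℂ) ≠ 0 := by
  rw [den_eq]
  have h : (0:ℝ) < Complex.normSq ζ + ε := by
    have := Complex.normSq_nonneg ζ; linarith
  exact_mod_cast Complex.ofReal_ne_zero.mpr h.ne'

lemma normSq_eq (ζ : ℂ) : Complex.normSq ζ = ‖ζ‖^2 := by
  rw [Complex.normSq_eq_norm_sq]

lemma aF_cont (ε : ℝ) (hε : 0 < ε) : Continuous (aF ε) := by
  apply Continuous.div (continuous_pow 2)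
  · exact (continuous_id.mul Complex.continuous_conj).add continuous_const
  · exact fun ζ => den_ne hε ζ

lemma rF_cont (ε : ℝ) (hε : 0 < ε) : Continuous (rF ε) := by
  apply Continuous.mul continuous_const
  apply Continuous.div continuous_id
  · exact (continuous_id.mul Complex.continuous_conj).add continuous_const
  · exact fun ζ => den_ne hε ζ

lemma aF_norm_le {ε : ℝ} (hε : 0 < ε) (ζ : ℂ) : ‖aF ε ζ‖ ≤ 1 := by
  rw [aF, den_eq, norm_div, norm_pow]
  have h1 : ‖((Complex.normSq ζ + ε : ℝ) : ℂ)‖ = Complex.normSq ζ + ε := by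
    rw [Complex.norm_real, Real.norm_eq_abs, abs_of_pos]
    have := Complex.normSq_nonneg ζ; linarith
  rw [h1, normSq_eq]
  have hpos : (0:ℝ) < ‖ζ‖^2 + ε := by positivity
  rw [div_le_one hpos]
  linarith

lemma rF_norm_le {ε : ℝ} (hε : 0 < ε) (ζ : ℂ) : ‖rF ε ζ‖ ≤ Real.sqrt ε / 2 := by
  rw [rF, den_eq, norm_mul, norm_div]
  have h1 : ‖((Complex.normSq ζ + ε : ℝ) : ℂ)‖ = Complex.normSq ζ + ε := by
    rw [Complex.norm_real, Real.norm_eq_abs, abs_of_pos]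
    have := Complex.normSq_nonneg ζ; linarith
  have h2 : ‖((ε:ℝ) : ℂ)‖ = ε := by
    rw [Complex.norm_real, Real.norm_eq_abs, abs_of_pos hε]
  rw [h1, h2, normSq_eq]
  set r := ‖ζ‖ with hr
  have hr0 : 0 ≤ r := norm_nonneg _
  have hpos : (0:ℝ) < r^2 + ε := by positivity
  have he : ε * (r / (r^2 + ε)) = (ε * r) / (r^2 + ε) := by ring
  rw [he, div_le_div_iff₀ hpos (by norm_num : (0:ℝ) < 2)]
  have hs : Real.sqrt ε ^ 2 = ε := Real.sq_sqrt hε.le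
  have hs0 : 0 ≤ Real.sqrt ε := Real.sqrt_nonneg _
  have hs0' : 0 < Real.sqrt ε := Real.sqrt_pos.mpr hε
  nlinarith [sq_nonneg (Real.sqrt ε - r), mul_nonneg hs0 (sq_nonneg (Real.sqrt ε - r))]

lemma approx_pt (m : ℕ) {ε : ℝ} (hε : 0 < ε) (ζ : ℂ) :
    ‖hFun (m:ℤ) ζ - (aF ε ζ)^m * ζ‖ ≤ m * Real.sqrt ε := by
  have hrhs : (0:ℝ) ≤ m * Real.sqrt ε := by positivity
  by_cases hζ : ζ = 0
  · have : aF ε 0 = 0 := by simp [aF]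
    simp [hζ, hFun_zero, this, hrhs]
  · have hcz : conj ζ ≠ 0 := by simpa using hζ
    set s : ℝ := Complex.normSq ζ with hs
    have hs0 : 0 ≤ s := Complex.normSq_nonneg ζ
    have hse : (0:ℝ) < s + ε := by linarith
    have hzc : ζ * conj ζ = ((s:ℝ):ℂ) := Complex.mul_conj ζ
    have hden : ζ * conj ζ + (ε:ℂ) = ((s + ε : ℝ):ℂ) := den_eq ε ζ
    have hdenne : (((s + ε : ℝ)):ℂ) ≠ 0 := by exact_mod_cast Complex.ofReal_ne_zero.mpr hse.ne'
    have key : (aF ε ζ)^m * ζ = hFun (m:ℤ) ζ * ((ζ * conj ζ)^m / (((s + ε : ℝ)):ℂ)^m) := by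
      rw [hFun_natCast hζ, aF, hden]
      field_simp
      have hd2 : ((s:ℂ) + (ε:ℂ)) ≠ 0 := by
        rw [Complex.ofReal_add] at hdenne; exact hdenne
      rw [div_pow, mul_div_assoc', div_mul_eq_mul_div, div_mul_cancel₀ _ (pow_ne_zero m hdenne)]
      ring
    have key2 : (aF ε ζ)^m * ζ = hFun (m:ℤ) ζ * (((s^m / (s+ε)^m : ℝ)):ℂ) := by
      rw [key, hzc]
      push_cast
      ring
    have hdiff : hFun (m:ℤ) ζ - (aF ε ζ)^m * ζ
        = hFun (m:ℤ) ζ * ((((1 - s^m / (s+ε)^m : ℝ))):ℂ) := by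
      rw [key2]
      push_cast
      ring
    rw [hdiff, norm_mul, norm_hFun, Complex.norm_real, Real.norm_eq_abs]
    have hfrac : s^m / (s+ε)^m ≤ 1 := by
      apply div_le_one_of_le₀ (pow_le_pow_left₀ hs0 (by linarith) m) (by positivity)
    rw [_root_.abs_of_nonneg (by linarith : (0:ℝ) ≤ 1 - s^m / (s+ε)^m)]
    -- ‖ζ‖ * (1 - s^m/(s+ε)^m) ≤ m √ε
    set r : ℝ := ‖ζ‖ with hr
    have hr0 : 0 ≤ r := norm_nonneg _
    have hsr : s = r^2 := by rw [hs, normSq_eq]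
    have hpow : (0:ℝ) < (s+ε)^m := by positivity
    have e1 : 1 - s^m / (s+ε)^m = ((s+ε)^m - s^m) / (s+ε)^m := by
      field_simp
    rw [e1, hsr]
    rw [mul_div_assoc', div_le_iff₀ (by positivity : (0:ℝ) < (r^2+ε)^m)]
    calc r * ((r^2+ε)^m - (r^2)^m) ≤ m * Real.sqrt ε * (r^2+ε)^m := RL m r ε hr0 hε
      _ = m * Real.sqrt ε * (r^2+ε)^m := rfl

lemma op_rec {E : Type*} [NormedRing E] [StarRing E] [NormedStarGroup E]
    (A B M N P Q : E) (δ : ℝ)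
    (hone : ‖(1:E)‖ ≤ 1)
    (hA : ‖A‖ ≤ 1) (hB : ‖B‖ ≤ 1)
    (hMrel : A * star M = M - P) (hNrel : star N * B = N - Q)
    (hP : ‖P‖ ≤ δ) (hQ : ‖Q‖ ≤ δ) :
    ∀ m : ℕ, ‖A^m * M - N * B^m‖ ≤ (2*m+1) * ‖M - N‖ + 2*m*δ := by
  have hA0 : 0 ≤ ‖A‖ := norm_nonneg _
  have hBpow : ∀ k : ℕ, ‖B^k‖ ≤ 1 := by
    intro k
    induction k with
    | zero => simpa using hone
    | succ k ihk =>
      calc ‖B^(k+1)‖ = ‖B^k * B‖ := by rw [pow_succ]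
        _ ≤ ‖B^k‖ * ‖B‖ := norm_mul_le _ _
        _ ≤ 1 * 1 := mul_le_mul ihk hB (norm_nonneg _) zero_le_one
        _ = 1 := by norm_num
  intro m
  induction m with
  | zero => simpa using by linarith [norm_nonneg (M - N)]
  | succ m ih =>
    have e2 : star N * B^(m+1) = (N - Q) * B^m := by
      rw [pow_succ', ← mul_assoc, hNrel]
    have e1 : A * ((star M - star N) * B^(m+1)) =
        (M - P) * B^(m+1) - A * ((N - Q) * B^m) := by
      rw [sub_mul, mul_sub, ← mul_assoc A (star M), hMrel, ← mul_assoc A (star N), ← e2,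
        mul_assoc]
    have key : A^(m+1) * M - N * B^(m+1)
        = A * (A^m * M - N * B^m) + (M - N) * B^(m+1)
          - A * ((star M - star N) * B^(m+1)) - P * B^(m+1) + A * (Q * B^m) := by
      rw [e1, pow_succ' A m, pow_succ B m]
      noncomm_ring
    have hd : 0 ≤ δ := le_trans (norm_nonneg _) hP
    have n1 : ‖A * (A^m * M - N * B^m)‖ ≤ (2*m+1) * ‖M - N‖ + 2*m*δ := by
      calc ‖A * (A^m * M - N * B^m)‖ ≤ ‖A‖ * ‖A^m * M - N * B^m‖ := norm_mul_le _ _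
        _ ≤ 1 * ((2*m+1) * ‖M - N‖ + 2*m*δ) := by
            apply mul_le_mul hA ih (norm_nonneg _) zero_le_one
        _ = (2*m+1) * ‖M - N‖ + 2*m*δ := by ring
    have n2 : ‖(M - N) * B^(m+1)‖ ≤ ‖M - N‖ := by
      calc ‖(M - N) * B^(m+1)‖ ≤ ‖M - N‖ * ‖B^(m+1)‖ := norm_mul_le _ _
        _ ≤ ‖M - N‖ * 1 := mul_le_mul_of_nonneg_left (hBpow (m+1)) (norm_nonneg _)
        _ = ‖M - N‖ := by ring
    have n3 : ‖A * ((star M - star N) * B^(m+1))‖ ≤ ‖M - N‖ := by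
      have hstar : ‖star M - star N‖ = ‖M - N‖ := by rw [← star_sub, norm_star]
      calc ‖A * ((star M - star N) * B^(m+1))‖
          ≤ ‖A‖ * ‖(star M - star N) * B^(m+1)‖ := norm_mul_le _ _
        _ ≤ 1 * (‖star M - star N‖ * ‖B^(m+1)‖) := by
            apply mul_le_mul hA (norm_mul_le _ _) (norm_nonneg _) zero_le_one
        _ ≤ 1 * (‖M - N‖ * 1) := by
            rw [hstar]
            apply mul_le_mul_of_nonneg_left
              (mul_le_mul_of_nonneg_left (hBpow (m+1)) (norm_nonneg _)) zero_le_one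
        _ = ‖M - N‖ := by ring
    have n4 : ‖P * B^(m+1)‖ ≤ δ := by
      calc ‖P * B^(m+1)‖ ≤ ‖P‖ * ‖B^(m+1)‖ := norm_mul_le _ _
        _ ≤ δ * 1 := mul_le_mul hP (hBpow (m+1)) (norm_nonneg _) hd
        _ = δ := by ring
    have n5 : ‖A * (Q * B^m)‖ ≤ δ := by
      calc ‖A * (Q * B^m)‖ ≤ ‖A‖ * ‖Q * B^m‖ := norm_mul_le _ _
        _ ≤ 1 * (δ * 1) := by
            apply mul_le_mul hA ?_ (norm_nonneg _) zero_le_one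
            calc ‖Q * B^m‖ ≤ ‖Q‖ * ‖B^m‖ := norm_mul_le _ _
              _ ≤ δ * 1 := mul_le_mul hQ (hBpow m) (norm_nonneg _) hd
        _ = δ := by ring
    calc ‖A^(m+1) * M - N * B^(m+1)‖
        ≤ ‖A * (A^m * M - N * B^m) + (M - N) * B^(m+1)
            - A * ((star M - star N) * B^(m+1)) - P * B^(m+1)‖ + ‖A * (Q * B^m)‖ := by
          rw [key]; exact norm_add_le _ _
      _ ≤ ‖A * (A^m * M - N * B^m) + (M - N) * B^(m+1)
            - A * ((star M - star N) * B^(m+1))‖ + ‖P * B^(m+1)‖ + ‖A * (Q * B^m)‖ := by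
          gcongr ?_ + _
          exact norm_sub_le _ _
      _ ≤ (‖A * (A^m * M - N * B^m) + (M - N) * B^(m+1)‖
            + ‖A * ((star M - star N) * B^(m+1))‖) + ‖P * B^(m+1)‖ + ‖A * (Q * B^m)‖ := by
          gcongr ?_ + _ + _
          exact norm_sub_le _ _
      _ ≤ ((‖A * (A^m * M - N * B^m)‖ + ‖(M - N) * B^(m+1)‖)
            + ‖A * ((star M - star N) * B^(m+1))‖) + ‖P * B^(m+1)‖ + ‖A * (Q * B^m)‖ := by
          gcongr ?_ + _ + _ + _
          exact norm_add_le _ _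
      _ ≤ (((2*m+1) * ‖M - N‖ + 2*m*δ + ‖M - N‖) + ‖M - N‖) + δ + δ := by
          gcongr
      _ = (2*(m+1:ℕ)+1) * ‖M - N‖ + 2*(m+1:ℕ)*δ := by push_cast; ring

section Op
variable {H : Type} [NormedAddCommGroup H] [InnerProductSpace ℂ H] [CompleteSpace H]

lemma op_eps (m : ℕ) {ε : ℝ} (hε : 0 < ε) (M N : H →L[ℂ] H)
    (hM : IsStarNormal M) (hN : IsStarNormal N) :
    ‖cfc (hFun (m:ℤ)) M - cfc (hFun (m:ℤ)) N‖
      ≤ (2*m+1) * ‖M - N‖ + 3*m*Real.sqrt ε := by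
  have hca : ContinuousOn (aF ε) (spectrum ℂ M) := (aF_cont ε hε).continuousOn
  have hca' : ContinuousOn (aF ε) (spectrum ℂ N) := (aF_cont ε hε).continuousOn
  have hcr : ContinuousOn (rF ε) (spectrum ℂ M) := (rF_cont ε hε).continuousOn
  have hcr' : ContinuousOn (rF ε) (spectrum ℂ N) := (rF_cont ε hε).continuousOn
  have hch : ∀ (T : H →L[ℂ] H), ContinuousOn (hFun (m:ℤ)) (spectrum ℂ T) :=
    fun T => (hFun_continuous (m:ℤ)).continuousOn
  set A := cfc (aF ε) M with hAdef
  set B := cfc (aF ε) N with hBdef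
  set P := cfc (rF ε) M with hPdef
  set Q := cfc (rF ε) N with hQdef
  have hA : ‖A‖ ≤ 1 := norm_cfc_le zero_le_one (fun ζ _ => aF_norm_le hε ζ)
  have hB : ‖B‖ ≤ 1 := norm_cfc_le zero_le_one (fun ζ _ => aF_norm_le hε ζ)
  have hδ0 : (0:ℝ) ≤ Real.sqrt ε / 2 := by positivity
  have hPn : ‖P‖ ≤ Real.sqrt ε / 2 := norm_cfc_le hδ0 (fun ζ _ => rF_norm_le hε ζ)
  have hQn : ‖Q‖ ≤ Real.sqrt ε / 2 := norm_cfc_le hδ0 (fun ζ _ => rF_norm_le hε ζ)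
  have hfun_id : ∀ ζ : ℂ, aF ε ζ * conj ζ = ζ - rF ε ζ := by
    intro ζ
    rw [aF, rF]
    field_simp [den_ne hε ζ]
    ring
  have hstarM : star M = cfc (fun ζ : ℂ => conj ζ) M := by
    have h := cfc_star (R := ℂ) (fun ζ : ℂ => ζ) M
    rw [cfc_id' ℂ M] at h
    exact h.symm
  have hstarN : star N = cfc (fun ζ : ℂ => conj ζ) N := by
    have h := cfc_star (R := ℂ) (fun ζ : ℂ => ζ) N
    rw [cfc_id' ℂ N] at h
    exact h.symm
  have hMrel : A * star M = M - P := by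
    rw [hstarM, hAdef, ← cfc_mul _ _ M hca Complex.continuous_conj.continuousOn]
    have h2 : M - P = cfc (fun ζ : ℂ => ζ - rF ε ζ) M := by
      have h1 := cfc_sub (fun ζ : ℂ => ζ) (rF ε) M continuous_id.continuousOn hcr
      rw [cfc_id' ℂ M] at h1
      exact h1.symm
    rw [h2]
    exact cfc_congr (fun ζ _ => hfun_id ζ)
  have hNrel : star N * B = N - Q := by
    rw [hstarN, hBdef, ← cfc_mul _ _ N Complex.continuous_conj.continuousOn hca']
    have h2 : N - Q = cfc (fun ζ : ℂ => ζ - rF ε ζ) N := by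
      have h1 := cfc_sub (fun ζ : ℂ => ζ) (rF ε) N continuous_id.continuousOn hcr'
      rw [cfc_id' ℂ N] at h1
      exact h1.symm
    rw [h2]
    apply cfc_congr
    intro ζ _
    show conj ζ * aF ε ζ = ζ - rF ε ζ
    rw [mul_comm]
    exact hfun_id ζ
  have hone : ‖(1 : H →L[ℂ] H)‖ ≤ 1 := by
    simpa [ContinuousLinearMap.one_def] using
      (ContinuousLinearMap.norm_id_le : ‖(ContinuousLinearMap.id ℂ H)‖ ≤ 1)
  have hrec := op_rec A B M N P Q (Real.sqrt ε / 2) hone hA hB hMrel hNrel hPn hQn m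
  have hAm : cfc (fun ζ : ℂ => (aF ε ζ)^m * ζ) M = A^m * M := by
    have h1 := cfc_mul (fun ζ : ℂ => (aF ε ζ)^m) (fun ζ : ℂ => ζ) M
      (hca.pow m) continuous_id.continuousOn
    rw [cfc_id' ℂ M] at h1
    have h2 := cfc_pow (aF ε) m (a := M) hca
    rw [h2] at h1
    exact h1
  have hBm : cfc (fun ζ : ℂ => (aF ε ζ)^m * ζ) N = N * B^m := by
    have e : (fun ζ : ℂ => (aF ε ζ)^m * ζ) = fun ζ : ℂ => ζ * (aF ε ζ)^m := by
      funext ζ; ring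
    rw [e]
    have h1 := cfc_mul (fun ζ : ℂ => ζ) (fun ζ : ℂ => (aF ε ζ)^m) N
      continuous_id.continuousOn (hca'.pow m)
    rw [cfc_id' ℂ N] at h1
    have h2 := cfc_pow (aF ε) m (a := N) hca'
    rw [h2] at h1
    exact h1
  have hcont_heps : ContinuousOn (fun ζ : ℂ => (aF ε ζ)^m * ζ) (spectrum ℂ M) :=
    (hca.pow m).mul continuousOn_id
  have hcont_heps' : ContinuousOn (fun ζ : ℂ => (aF ε ζ)^m * ζ) (spectrum ℂ N) :=
    (hca'.pow m).mul continuousOn_id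
  have happroxM : ‖cfc (hFun (m:ℤ)) M - cfc (fun ζ : ℂ => (aF ε ζ)^m * ζ) M‖
      ≤ m * Real.sqrt ε := by
    rw [← cfc_sub _ _ M (hch M) hcont_heps]
    exact norm_cfc_le (by positivity) (fun ζ _ => approx_pt m hε ζ)
  have happroxN : ‖cfc (fun ζ : ℂ => (aF ε ζ)^m * ζ) N - cfc (hFun (m:ℤ)) N‖
      ≤ m * Real.sqrt ε := by
    rw [← cfc_sub _ _ N hcont_heps' (hch N)]
    refine norm_cfc_le (by positivity) (fun ζ _ => ?_)
    rw [← norm_neg]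
    simpa using approx_pt m hε ζ
  calc ‖cfc (hFun (m:ℤ)) M - cfc (hFun (m:ℤ)) N‖
      = ‖(cfc (hFun (m:ℤ)) M - cfc (fun ζ : ℂ => (aF ε ζ)^m * ζ) M)
          + (cfc (fun ζ : ℂ => (aF ε ζ)^m * ζ) M - cfc (fun ζ : ℂ => (aF ε ζ)^m * ζ) N)
          + (cfc (fun ζ : ℂ => (aF ε ζ)^m * ζ) N - cfc (hFun (m:ℤ)) N)‖ := by
        congr 1; abel
    _ ≤ ‖(cfc (hFun (m:ℤ)) M - cfc (fun ζ : ℂ => (aF ε ζ)^m * ζ) M)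
          + (cfc (fun ζ : ℂ => (aF ε ζ)^m * ζ) M - cfc (fun ζ : ℂ => (aF ε ζ)^m * ζ) N)‖
          + ‖cfc (fun ζ : ℂ => (aF ε ζ)^m * ζ) N - cfc (hFun (m:ℤ)) N‖ := norm_add_le _ _
    _ ≤ ‖cfc (hFun (m:ℤ)) M - cfc (fun ζ : ℂ => (aF ε ζ)^m * ζ) M‖
          + ‖cfc (fun ζ : ℂ => (aF ε ζ)^m * ζ) M - cfc (fun ζ : ℂ => (aF ε ζ)^m * ζ) N‖
          + ‖cfc (fun ζ : ℂ => (aF ε ζ)^m * ζ) N - cfc (hFun (m:ℤ)) N‖ := by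
        gcongr ?_ + _
        exact norm_add_le _ _
    _ ≤ m * Real.sqrt ε + ((2*m+1) * ‖M - N‖ + 2*m*(Real.sqrt ε / 2)) + m * Real.sqrt ε := by
        gcongr
        rw [hAm, hBm]
        exact hrec
    _ = (2*m+1) * ‖M - N‖ + 3*m*Real.sqrt ε := by ring

end Op

lemma op_nat {H : Type} [NormedAddCommGroup H] [InnerProductSpace ℂ H] [CompleteSpace H]
    (m : ℕ) (M N : H →L[ℂ] H) (hM : IsStarNormal M) (hN : IsStarNormal N) :
    ‖cfc (hFun (m:ℤ)) M - cfc (hFun (m:ℤ)) N‖ ≤ (2*m+1) * ‖M - N‖ := by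
  apply le_of_forall_pos_le_add
  intro η hη
  set ε : ℝ := (η/(3*m+1))^2 with hεdef
  have hε : 0 < ε := by positivity
  have hsq : Real.sqrt ε = η/(3*m+1) := by
    rw [hεdef, Real.sqrt_sq (by positivity)]
  have h1 := op_eps m hε M N hM hN
  rw [hsq] at h1
  have h2 : 3*(m:ℝ)*(η/(3*m+1)) ≤ η := by
    have hpos : (0:ℝ) < 3*(m:ℝ)+1 := by positivity
    rw [mul_div_assoc', div_le_iff₀ hpos]
    nlinarith [Nat.cast_nonneg (α := ℝ) m]
  linarith

lemma op_int {H : Type} [NormedAddCommGroup H] [InnerProductSpace ℂ H] [CompleteSpace H]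
    (n : ℤ) (M N : H →L[ℂ] H) (hM : IsStarNormal M) (hN : IsStarNormal N) :
    ‖cfc (hFun n) M - cfc (hFun n) N‖ ≤ |2*(n:ℝ)+1| * ‖M - N‖ := by
  rcases le_or_gt 0 n with hn | hn
  · obtain ⟨m, rfl⟩ := Int.eq_ofNat_of_zero_le hn
    have habs : |2 * (((m:ℤ)):ℝ) + 1| = 2 * (m:ℝ) + 1 := by
      push_cast; rw [_root_.abs_of_nonneg (by positivity)]
    rw [habs]
    exact_mod_cast op_nat m M N hM hN
  · set m := (-n-1).toNat with hmdef
    have hn' : n = -(m:ℤ) - 1 := neg_int_form hn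
    have habs : |2 * ((n:ℤ):ℝ) + 1| = 2 * (m:ℝ) + 1 := by
      rw [hn']
      push_cast
      rw [show (2 * (-(m:ℝ)-1) + 1) = -(2 * (m:ℝ) + 1) by ring, abs_neg,
        _root_.abs_of_nonneg (by positivity)]
    have hfn : hFun n = fun ζ => star (hFun (m:ℤ) ζ) := by
      funext ζ
      rw [hn', hFun_neg]
      rfl
    have hstM : cfc (hFun n) M = star (cfc (hFun (m:ℤ)) M) := by
      rw [hfn, cfc_star]
    have hstN : cfc (hFun n) N = star (cfc (hFun (m:ℤ)) N) := by
      rw [hfn, cfc_star]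
    rw [habs, hstM, hstN, ← star_sub, norm_star]
    exact op_nat m M N hM hN

/-- Theorem 3.5 (Theorem `hn`): `h_n` is operator Lipschitz with constant `|2n+1|`,
its best Lipschitz constant equals `|2n+1|`, and for `n ∉ {0, -1}` it is not
(real-)differentiable at the origin. -/
theorem stmt_3 (n : ℤ) :
    (∀ (H : Type) [NormedAddCommGroup H] [InnerProductSpace ℂ H] [CompleteSpace H]
      (N₁ N₂ : H →L[ℂ] H), IsStarNormal N₁ → IsStarNormal N₂ →
      ‖cfc (hFun n) N₁ - cfc (hFun n) N₂‖ ≤ |2 * (n : ℝ) + 1| * ‖N₁ - N₂‖)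
    ∧ (∀ ζ₁ ζ₂ : ℂ,
        ‖hFun n ζ₁ - hFun n ζ₂‖ ≤ |2 * (n : ℝ) + 1| * ‖ζ₁ - ζ₂‖)
    ∧ (∀ C : ℝ,
        (∀ ζ₁ ζ₂ : ℂ, ‖hFun n ζ₁ - hFun n ζ₂‖ ≤ C * ‖ζ₁ - ζ₂‖) →
        |2 * (n : ℝ) + 1| ≤ C)
    ∧ (n ≠ 0 → n ≠ -1 → ¬ DifferentiableAt ℝ (hFun n) 0) := by
  refine ⟨?_, ?_, ?_, ?_⟩
  · intro H _ _ _ N₁ N₂ h₁ h₂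
    exact op_int n N₁ N₂ h₁ h₂
  · intro ζ₁ ζ₂
    exact scalar_int n ζ₁ ζ₂
  · intro C hC
    apply sharp_int n C
    intro ζ₁ ζ₂
    exact hC ζ₁ ζ₂
  · exact not_diff n
end

section
/- There is a constant C > 0 with the following property: for all δ, r with 0 < δ < r < ∞ there exists a function g ∈ L¹(ℂ) such that, with h = 𝓕g its Fourier transform, one has ∫_ℂ |g| ≤ C·log(2r/δ), h(0) = 0, and h(z) = z̄/z for every z with δ ≤ |z| ≤ r. -/
open scoped ComplexConjugate
open MeasureTheory

/-- The Fourier transform `(𝓕g)(z) = ∫ g(ζ) e^{-i Re(z ζ̄)} dA(ζ)` of a function on `ℂ ≅ ℝ²`. -/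
noncomputable def planeFT (g : ℂ → ℂ) (z : ℂ) : ℂ :=
  ∫ ζ : ℂ, g ζ * Complex.exp (-Complex.I * ((z * conj ζ).re : ℂ))

open scoped FourierTransform ContDiff

namespace Stmt4

noncomputable def phi0 (t : ℝ) : ℝ := Real.smoothTransition (2 - t)

lemma phi0_of_le {t : ℝ} (h : t ≤ 1) : phi0 t = 1 :=
  Real.smoothTransition.one_of_one_le (by linarith)

lemma phi0_of_ge {t : ℝ} (h : 2 ≤ t) : phi0 t = 0 :=
  Real.smoothTransition.zero_of_nonpos (by linarith)

lemma phi0_contDiff : ContDiff ℝ ∞ phi0 := by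
  have : ContDiff ℝ ∞ fun t : ℝ => (2 : ℝ) - t := contDiff_const.sub contDiff_id
  exact Real.smoothTransition.contDiff.comp this

noncomputable def chi0 (t : ℝ) : ℝ := phi0 t - phi0 (2 * t)

lemma chi0_of_le {t : ℝ} (h : t ≤ 1/2) : chi0 t = 0 := by
  rw [chi0, phi0_of_le (by linarith), phi0_of_le (by linarith)]; ring

lemma chi0_of_ge {t : ℝ} (h : 2 ≤ t) : chi0 t = 0 := by
  rw [chi0, phi0_of_ge (by linarith), phi0_of_ge (by linarith)]; ring

lemma chi0_contDiff : ContDiff ℝ ∞ chi0 :=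
  phi0_contDiff.sub (phi0_contDiff.comp (contDiff_const.mul contDiff_id))

noncomputable def h0 : ℂ → ℂ := fun z => (chi0 ‖z‖ : ℂ) * (conj z / z)

lemma h0_small {z : ℂ} (h : ‖z‖ ≤ 1/2) : h0 z = 0 := by
  unfold h0; rw [chi0_of_le h]; simp

lemma h0_large {z : ℂ} (h : 2 ≤ ‖z‖) : h0 z = 0 := by
  unfold h0; rw [chi0_of_ge h]; simp

lemma h0_contDiff : ContDiff ℝ ∞ h0 := by
  rw [contDiff_iff_contDiffAt]
  intro z
  rcases lt_or_ge ‖z‖ (1/2) with hz | hz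
  · apply ContDiffAt.congr_of_eventuallyEq (contDiffAt_const (c := (0:ℂ)))
    have hev : ∀ᶠ w in nhds z, ‖w‖ < 1/2 :=
      (isOpen_lt continuous_norm continuous_const).mem_nhds hz
    filter_upwards [hev] with w hw
    exact h0_small hw.le
  · have hz0 : z ≠ 0 := by
      intro h; rw [h] at hz; simp at hz; linarith
    have h1 : ContDiffAt ℝ ∞ (fun w : ℂ => ((chi0 ‖w‖ : ℝ) : ℂ)) z :=
      Complex.ofRealCLM.contDiff.contDiffAt.comp z
        (chi0_contDiff.contDiffAt.comp z (contDiffAt_norm (𝕜 := ℝ) hz0))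
    have h2 : ContDiffAt ℝ ∞ (fun w : ℂ => (conj w : ℂ)) z :=
      Complex.conjCLE.contDiff.contDiffAt
    have h3 : ContDiffAt ℝ ∞ (fun w : ℂ => w⁻¹) z := contDiffAt_id.inv hz0
    exact ((h1.mul h2).mul h3).congr_of_eventuallyEq
      (Filter.Eventually.of_forall fun w => by unfold h0; ring)

lemma h0_hcs : HasCompactSupport h0 := by
  apply HasCompactSupport.of_support_subset_isCompact (isCompact_closedBall (0:ℂ) 2)
  intro z hz
  simp only [Metric.mem_closedBall, dist_zero_right]
  by_contra h
  exact hz (h0_large (le_of_lt (not_le.mp h)))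


noncomputable def H : SchwartzMap ℂ ℂ where
  toFun := h0
  smooth' := h0_contDiff
  decay' := by
    intro k n
    obtain ⟨C, hC⟩ := (h0_contDiff.continuous_iteratedFDeriv
      (mod_cast le_top)).bounded_above_of_compact_support (h0_hcs.iteratedFDeriv n)
    refine ⟨2 ^ k * C, fun x => ?_⟩
    rcases le_or_gt ‖x‖ 2 with hx | hx
    · have h0C : (0:ℝ) ≤ C := le_trans (norm_nonneg _) (hC 0)
      exact mul_le_mul (pow_le_pow_left₀ (norm_nonneg _) hx k) (hC x) (norm_nonneg _)
        (by positivity)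
    · have hxn : x ∉ tsupport h0 := by
        intro hmem
        have : tsupport h0 ⊆ Metric.closedBall 0 2 := by
          apply closure_minimal _ Metric.isClosed_closedBall
          intro w hw
          simp only [Metric.mem_closedBall, dist_zero_right]
          by_contra hcon
          exact hw (h0_large (le_of_lt (not_le.mp hcon)))
        have := this hmem
        simp only [Metric.mem_closedBall, dist_zero_right] at this
        linarith
      have hzero : iteratedFDeriv ℝ n h0 x = 0 := by
        by_contra hne
        exact hxn (support_iteratedFDeriv_subset n (Function.mem_support.mpr hne))
      rw [hzero]
      have h0C : (0:ℝ) ≤ C := le_trans (norm_nonneg _) (hC 0)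
      simp
      positivity

lemma H_coe : ⇑H = h0 := rfl

noncomputable def g0 : SchwartzMap ℂ ℂ := (FourierTransform.fourierCLE ℂ (SchwartzMap ℂ ℂ)).symm H

lemma ft_g0 : 𝓕 ⇑g0 = ⇑H := by
  have h1 : FourierTransform.fourierCLE ℂ (SchwartzMap ℂ ℂ) g0 = H :=
    (FourierTransform.fourierCLE ℂ (SchwartzMap ℂ ℂ)).apply_symm_apply H
  rw [← h1]
  exact (SchwartzMap.fourier_coe g0).symm

lemma planeFT_eq_fourierIntegral (g : ℂ → ℂ) (z : ℂ) :
    planeFT g z = 𝓕 g ((2 * Real.pi)⁻¹ • z) := by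
  rw [Real.fourier_eq']
  unfold planeFT
  congr 1
  funext v
  rw [smul_eq_mul, mul_comm]
  congr 1
  have hinner : (inner ℝ v ((2 * Real.pi)⁻¹ • z) : ℝ)
      = (2 * Real.pi)⁻¹ * (z * conj v).re := by
    rw [real_inner_smul_right, Complex.inner]
  rw [hinner]
  have h2pi : (2 * Real.pi) ≠ 0 := by positivity
  have harg : -2 * Real.pi * ((2 * Real.pi)⁻¹ * (z * conj v).re)
      = -(z * conj v).re := by field_simp
  rw [harg]
  push_cast
  ring

lemma planeFT_comp_smul (g : ℂ → ℂ) {s : ℝ} (hs : 0 < s) (z : ℂ) :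
    planeFT (fun ζ => (s ^ 2 : ℝ) • g (s • ζ)) z = planeFT g (s⁻¹ • z) := by
  have hsne : (s : ℂ) ≠ 0 := Complex.ofReal_ne_zero.2 hs.ne'
  unfold planeFT
  set F : ℂ → ℂ :=
    fun u => g u * Complex.exp (-Complex.I * (((s⁻¹ • z) * conj u).re : ℂ)) with hF
  have key : ∀ ζ : ℂ,
      (s ^ 2 : ℝ) • g (s • ζ) * Complex.exp (-Complex.I * ((z * conj ζ).re : ℂ))
      = (s ^ 2 : ℝ) • F (s • ζ) := by
    intro ζ
    have hre : (s⁻¹ • z) * conj (s • ζ) = z * conj ζ := by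
      rw [Complex.real_smul, Complex.real_smul, map_mul, Complex.conj_ofReal]
      push_cast
      field_simp
      try ring
    rw [hF]
    simp only [smul_mul_assoc, hre]
  simp_rw [key]
  rw [integral_smul, MeasureTheory.Measure.integral_comp_smul_of_nonneg volume F s (hR := hs.le)]
  rw [Complex.finrank_real_complex]
  rw [smul_smul, mul_inv_cancel₀ (pow_ne_zero 2 hs.ne'), one_smul]

lemma l1_comp_smul (g : ℂ → ℂ) {s : ℝ} (hs : 0 < s) :
    ∫ ζ : ℂ, ‖(s ^ 2 : ℝ) • g (s • ζ)‖ = ∫ ζ : ℂ, ‖g ζ‖ := by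
  set F : ℂ → ℝ := fun u => ‖g u‖ with hF
  have key : ∀ ζ : ℂ, ‖(s ^ 2 : ℝ) • g (s • ζ)‖ = (s ^ 2 : ℝ) • F (s • ζ) := by
    intro ζ
    rw [hF, norm_smul]
    simp [abs_of_pos (pow_pos hs 2), smul_eq_mul]
  simp_rw [key]
  rw [integral_smul, MeasureTheory.Measure.integral_comp_smul_of_nonneg volume F s (hR := hs.le)]
  rw [Complex.finrank_real_complex]
  rw [smul_smul, mul_inv_cancel₀ (pow_ne_zero 2 hs.ne'), one_smul]

lemma int_comp_smul {s : ℝ} (hs : 0 < s) :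
    Integrable (fun ζ : ℂ => (s ^ 2 : ℝ) • (g0 : ℂ → ℂ) (s • ζ)) :=
  ((integrable_comp_smul_iff volume (g0 : ℂ → ℂ) hs.ne').2 g0.integrable).smul (s ^ 2 : ℝ)

lemma H_apply {c : ℝ} (hc : 0 < c) (z : ℂ) :
    H (c • z) = ((chi0 (c * ‖z‖) : ℝ) : ℂ) * (conj z / z) := by
  show h0 (c • z) = _
  unfold h0
  rcases eq_or_ne z 0 with rfl | hz
  · simp
  · rw [norm_smul, Real.norm_eq_abs, abs_of_pos hc]
    congr 1
    rw [Complex.real_smul, map_mul, Complex.conj_ofReal]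
    rw [mul_div_mul_left _ _ (by exact_mod_cast hc.ne' : (c:ℂ) ≠ 0)]

lemma kernel_norm (z ζ : ℂ) : ‖Complex.exp (-Complex.I * ((z * conj ζ).re : ℂ))‖ = 1 := by
  rw [Complex.norm_exp]
  simp

lemma mul_kernel_integrable {f : ℂ → ℂ} (hf : Integrable f) (z : ℂ) :
    Integrable (fun ζ => f ζ * Complex.exp (-Complex.I * ((z * conj ζ).re : ℂ))) := by
  have hcont : Continuous fun ζ : ℂ => Complex.exp (-Complex.I * ((z * conj ζ).re : ℂ)) := by
    fun_prop
  exact (hf.bdd_mul hcont.aestronglyMeasurable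
    (Filter.Eventually.of_forall fun ζ => le_of_eq (kernel_norm z ζ))).congr
    (Filter.Eventually.of_forall fun ζ => mul_comm _ _)

lemma planeFT_sum {ι : Type*} (t : Finset ι) (f : ι → ℂ → ℂ)
    (hf : ∀ i ∈ t, Integrable (f i)) (z : ℂ) :
    planeFT (fun ζ => ∑ i ∈ t, f i ζ) z = ∑ i ∈ t, planeFT (f i) z := by
  unfold planeFT
  rw [← integral_finset_sum t (fun i hi => mul_kernel_integrable (hf i hi) z)]
  congr 1
  funext ζ
  rw [Finset.sum_mul]

lemma sum_chi0 (t : ℝ) (N : ℕ) :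
    ∑ k ∈ Finset.range N, chi0 (t / 2 ^ k)
      = phi0 (2 * t / 2 ^ N) - phi0 (2 * t) := by
  have key : ∀ k : ℕ, chi0 (t / 2 ^ k)
      = (fun j => phi0 (2 * t / 2 ^ j)) (k + 1) - (fun j => phi0 (2 * t / 2 ^ j)) k := by
    intro k
    simp only
    rw [chi0]
    congr 2
    · rw [pow_succ]; ring
    · ring
  simp_rw [key]
  rw [Finset.sum_range_sub (fun j => phi0 (2 * t / 2 ^ j))]
  norm_num

end Stmt4


open Stmt4 in
/-- Lemma 4.1 (Lemma `log0`): for `0 < δ < r` there is `h = 𝓕g` with `g ∈ L¹(ℂ)`,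
`‖g‖_{L¹} ≤ C log(2r/δ)`, `h(0) = 0`, and `h(z) = z̄/z` on the annulus `δ ≤ |z| ≤ r`. -/
theorem stmt_4 :
    ∃ C > (0 : ℝ), ∀ δ r : ℝ, 0 < δ → δ < r →
      ∃ g : ℂ → ℂ, Integrable g ∧
        (∫ ζ : ℂ, ‖g ζ‖) ≤ C * Real.log (2 * r / δ) ∧
        planeFT g 0 = 0 ∧
        (∀ z : ℂ, δ ≤ ‖z‖ → ‖z‖ ≤ r →
          planeFT g z = conj z / z) := by
  classical
  set A : ℝ := ∫ ζ : ℂ, ‖(g0 : ℂ → ℂ) ζ‖ with hAdef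
  have hA0 : 0 ≤ A := integral_nonneg fun ζ => norm_nonneg _
  have hlog2 : 0 < Real.log 2 := Real.log_pos one_lt_two
  refine ⟨3 * (A + 1) / Real.log 2, by positivity, ?_⟩
  intro δ r hδ hδr
  have hr : 0 < r := hδ.trans hδr
  set m : ℕ := ⌈Real.logb 2 (r / δ)⌉₊ with hm
  set N : ℕ := m + 1 with hNdef
  set s : ℕ → ℝ := fun k => 2 ^ k * δ / (2 * Real.pi) with hsdef
  have hspos : ∀ k, 0 < s k := fun k => by
    rw [hsdef]
    have := Real.pi_pos
    positivity
  set gk : ℕ → ℂ → ℂ := fun k => fun ζ => (s k ^ 2 : ℝ) • (g0 : ℂ → ℂ) (s k • ζ) with hgkdef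
  have hgk_int : ∀ k, Integrable (gk k) := fun k => int_comp_smul (hspos k)
  have hg_int : Integrable (fun ζ : ℂ => ∑ k ∈ Finset.range N, gk k ζ) :=
    integrable_finset_sum _ (fun k _ => hgk_int k)
  refine ⟨fun ζ => ∑ k ∈ Finset.range N, gk k ζ, hg_int, ?_, ?_, ?_⟩
  · -- L¹ bound
    have hterm : ∀ k, (∫ ζ : ℂ, ‖gk k ζ‖) = A := by
      intro k
      rw [hgkdef]
      simp only
      exact l1_comp_smul _ (hspos k)
    have step1 : (∫ ζ : ℂ, ‖∑ k ∈ Finset.range N, gk k ζ‖)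
        ≤ ∫ ζ : ℂ, ∑ k ∈ Finset.range N, ‖gk k ζ‖ := by
      apply integral_mono hg_int.norm (integrable_finset_sum _ fun k _ => (hgk_int k).norm)
      intro ζ
      exact norm_sum_le _ _
    have step2 : (∫ ζ : ℂ, ∑ k ∈ Finset.range N, ‖gk k ζ‖)
        = (N : ℝ) * A := by
      rw [integral_finset_sum _ (fun k _ => (hgk_int k).norm)]
      rw [Finset.sum_congr rfl (fun x _ => hterm x), Finset.sum_const, Finset.card_range,
        nsmul_eq_mul]
    set L : ℝ := Real.log (2 * r / δ) with hLdef
    have hrδ1 : (1:ℝ) ≤ r / δ := le_of_lt ((one_lt_div hδ).2 hδr)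
    have hL2 : Real.log 2 ≤ L := by
      apply Real.log_le_log two_pos
      rw [le_div_iff₀ hδ]; linarith
    have hL0 : 0 ≤ L := hlog2.le.trans hL2
    have hxL : Real.logb 2 (r / δ) * Real.log 2 ≤ L := by
      rw [Real.logb, div_mul_cancel₀ _ hlog2.ne']
      apply Real.log_le_log (div_pos hr hδ)
      rw [div_le_div_iff₀ hδ hδ]
      nlinarith
    have hNle : (N : ℝ) ≤ Real.logb 2 (r / δ) + 2 := by
      have h1 : (⌈Real.logb 2 (r / δ)⌉₊ : ℝ) < Real.logb 2 (r / δ) + 1 :=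
        Nat.ceil_lt_add_one (Real.logb_nonneg one_lt_two hrδ1)
      rw [hNdef, hm]
      push_cast
      linarith
    have hN3 : (N : ℝ) * Real.log 2 ≤ 3 * L := by
      nlinarith
    calc (∫ ζ : ℂ, ‖∑ k ∈ Finset.range N, gk k ζ‖) ≤ (N : ℝ) * A := by
          rw [← step2]; exact step1
      _ ≤ 3 * (A + 1) / Real.log 2 * L := by
          rw [div_mul_eq_mul_div, le_div_iff₀ hlog2]
          nlinarith
  · -- value at 0
    rw [planeFT_sum _ _ (fun k _ => hgk_int k)]
    have hterm : ∀ k, planeFT (gk k) 0 = 0 := by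
      intro k
      rw [hgkdef]
      simp only
      rw [planeFT_comp_smul _ (hspos k), planeFT_eq_fourierIntegral, ft_g0]
      have h0 : ((2 * Real.pi)⁻¹ : ℝ) • (s k)⁻¹ • (0:ℂ) = ((1:ℝ) • (0:ℂ)) := by simp
      rw [h0, H_apply one_pos]
      simp
    simp [hterm]
  · -- annulus
    intro z hz1 hz2
    have hπ : (0:ℝ) < Real.pi := Real.pi_pos
    rw [planeFT_sum _ _ (fun k _ => hgk_int k)]
    have hterm : ∀ k, planeFT (gk k) z
        = ((chi0 ((‖z‖ / δ) / 2 ^ k) : ℝ) : ℂ) * (conj z / z) := by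
      intro k
      rw [hgkdef]
      simp only
      rw [planeFT_comp_smul _ (hspos k), planeFT_eq_fourierIntegral, ft_g0]
      have hsmul : ((2 * Real.pi)⁻¹ : ℝ) • (s k)⁻¹ • z = (((2:ℝ) ^ k * δ)⁻¹ : ℝ) • z := by
        rw [smul_smul]
        congr 1
        rw [hsdef]
        simp only
        field_simp
      rw [hsmul, H_apply (by positivity)]
      congr 2
      field_simp
    simp_rw [hterm]
    rw [← Finset.sum_mul]
    have hsum : ∑ k ∈ Finset.range N, chi0 ((‖z‖ / δ) / 2 ^ k) = 1 := by
      rw [sum_chi0]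
      have hlhs : phi0 (2 * (‖z‖ / δ) / 2 ^ N) = 1 := by
        apply phi0_of_le
        have hrd : r / δ ≤ 2 ^ m := by
          have h1 : r / δ = (2:ℝ) ^ (Real.logb 2 (r / δ)) :=
            (Real.rpow_logb two_pos (by norm_num) (div_pos hr hδ)).symm
          have h2 : (2:ℝ) ^ (Real.logb 2 (r / δ)) ≤ (2:ℝ) ^ ((m:ℕ) : ℝ) :=
            Real.rpow_le_rpow_of_exponent_le one_le_two (Nat.le_ceil _)
          rw [Real.rpow_natCast] at h2
          linarith [h1 ▸ h2]
        have hzd : ‖z‖ / δ ≤ 2 ^ m := le_trans (by gcongr) hrd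
        rw [hNdef, pow_succ, div_le_one (by positivity)]
        nlinarith
      have hrhs : phi0 (2 * (‖z‖ / δ)) = 0 := by
        apply phi0_of_ge
        have h1 : (1:ℝ) ≤ ‖z‖ / δ := (one_le_div hδ).2 hz1
        linarith
      rw [hlhs, hrhs]
      ring
    rw [← Complex.ofReal_sum, hsum, Complex.ofReal_one, one_mul]
end

section
/- Let ℤ[i] = {a + bi : a, b ∈ ℤ} be the Gaussian integers. There exists a constant c > 0 such that for every real r ≥ 3 the following holds: with S = {m ∈ ℤ[i] : |m| ≤ r} and the matrix entries b(m, n) = 1/|m − n|² for m ≠ n in S and b(m, m) = 0, the operator norm of this matrix on ℓ²(S) is at least c·log r; equivalently, there exists u : S → ℂ with ∑_{m ∈ S} |u(m)|² = 1 and ∑_{m,n ∈ S} b(m, n) u(n) conj(u(m)) ≥ c·log r. -/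
open scoped ComplexConjugate

set_option maxHeartbeats 1000000

/-- The Gaussian integer `a + b i` attached to `(a, b) ∈ ℤ × ℤ`, as a complex number. -/
noncomputable def gaussInt (p : ℤ × ℤ) : ℂ := (p.1 : ℂ) + (p.2 : ℂ) * Complex.I

lemma abs_gaussInt_sq (p : ℤ × ℤ) : ‖gaussInt p‖ ^ 2 = (p.1:ℝ)^2 + (p.2:ℝ)^2 := by
  rw [Complex.sq_norm, Complex.normSq_apply]; simp [gaussInt]; ring

lemma gaussInt_sub (p q : ℤ × ℤ) : gaussInt p - gaussInt q = gaussInt (p - q) := by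
  simp [gaussInt]; ring

noncomputable def S2 (K : ℕ) : Finset (ℤ × ℤ) := Finset.Icc (0:ℤ) (2*K) ×ˢ Finset.Icc (0:ℤ) (2*K)
noncomputable def SK (K : ℕ) : Finset (ℤ × ℤ) := Finset.Icc (0:ℤ) K ×ˢ Finset.Icc (0:ℤ) K
noncomputable def DD (K : ℕ) : Finset (ℤ × ℤ) := Finset.Icc (1:ℤ) K ×ˢ Finset.Icc (1:ℤ) K

noncomputable def eps (K : ℕ) : ℝ := ((2*K+1 : ℕ) : ℝ)⁻¹
noncomputable def uu (K : ℕ) : ℤ × ℤ → ℂ := fun m => if m ∈ S2 K then ((eps K : ℝ) : ℂ) else 0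
noncomputable def ww (K : ℕ) (m n : ℤ × ℤ) : ℝ :=
  (if m = n then (0:ℝ) else (‖gaussInt m - gaussInt n‖ ^ 2)⁻¹) * ((uu K n) * conj (uu K m)).re

variable (K : ℕ)

lemma eps_pos : 0 < eps K := by unfold eps; positivity

lemma card_S2 : (S2 K).card = (2*K+1)^2 := by
  simp [S2, Int.card_Icc]
  rw [sq, show ((2*(K:ℤ)+1)).toNat = 2*K+1 by omega]

lemma card_SK : (SK K).card = (K+1)^2 := by
  simp [SK, Int.card_Icc]
  rw [sq]

lemma uu_re (m n : ℤ × ℤ) :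
    ((uu K n) * conj (uu K m)).re = (if n ∈ S2 K then eps K else 0) * (if m ∈ S2 K then eps K else 0) := by
  by_cases hm : m ∈ S2 K <;> by_cases hn : n ∈ S2 K <;>
    simp [uu, hm, hn, Complex.conj_ofReal, ← Complex.ofReal_mul]

lemma ww_nonneg (m n : ℤ × ℤ) : 0 ≤ ww K m n := by
  unfold ww
  rw [uu_re]
  have h := (eps_pos K).le
  apply mul_nonneg
  · split <;> positivity
  · apply mul_nonneg <;> (split <;> simp [h])

lemma ww_eq (m n : ℤ × ℤ) (hm : m ∈ S2 K) (hn : n ∈ S2 K) (hne : m ≠ n) :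
    ww K m n = (((m.1 - n.1 : ℤ):ℝ)^2 + ((m.2 - n.2 : ℤ):ℝ)^2)⁻¹ * eps K ^ 2 := by
  unfold ww
  rw [uu_re, if_pos hm, if_pos hn, if_neg hne, gaussInt_sub, abs_gaussInt_sq]
  simp [sq]

lemma norm_one : ∑ᶠ m : ℤ × ℤ, ‖uu K m‖ ^ 2 = 1 := by
  have hsupp : (Function.support fun m => ‖uu K m‖ ^ 2) ⊆ ↑(S2 K) := by
    intro m hm
    by_contra h
    apply hm
    simp only [uu, if_neg (by simpa using h)]
    simp
  rw [finsum_eq_finset_sum_of_support_subset _ hsupp]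
  have : ∀ m ∈ S2 K, ‖uu K m‖ ^ 2 = eps K ^ 2 := by
    intro m hm
    simp [uu, hm, Complex.norm_real, abs_of_pos (eps_pos K)]
  rw [Finset.sum_congr rfl this, Finset.sum_const, card_S2, nsmul_eq_mul]
  unfold eps
  push_cast
  rw [inv_pow]
  rw [mul_inv_cancel₀ (by positivity)]

lemma harm : Real.log (K + 1) ≤ ∑ a ∈ Finset.Icc (1:ℤ) (K:ℤ), ((a:ℝ))⁻¹ := by
  have h1 := log_add_one_le_harmonic K
  have h2 : (harmonic K : ℝ) = ∑ a ∈ Finset.Icc (1:ℤ) (K:ℤ), ((a:ℝ))⁻¹ := by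
    rw [harmonic_eq_sum_Icc]
    push_cast
    refine Finset.sum_nbij' (fun n => (n:ℤ)) (fun n => n.toNat) ?_ ?_ ?_ ?_ ?_ <;> intros <;>
      simp_all [Finset.mem_Icc] <;> omega
  rw [← h2]; simpa using h1

lemma sum_DD :
    (1/2 : ℝ) * Real.log (K+1) ≤ ∑ d ∈ DD K, (((d.1 : ℝ))^2 + ((d.2 : ℝ))^2)⁻¹ := by
  rw [DD, Finset.sum_product]
  have step1 : ∀ a ∈ Finset.Icc (1:ℤ) (K:ℤ),
      (2 * (a:ℝ))⁻¹ ≤ ∑ b ∈ Finset.Icc (1:ℤ) (K:ℤ), (((a : ℝ))^2 + ((b : ℝ))^2)⁻¹ := by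
    intro a ha
    rw [Finset.mem_Icc] at ha
    have ha1 : (1:ℝ) ≤ (a:ℝ) := by exact_mod_cast ha.1
    have hcard : (Finset.Icc (1:ℤ) a).card = a.toNat := by
      rw [Int.card_Icc]; congr 1; omega
    have hcast : ((a.toNat : ℕ) : ℝ) = (a:ℝ) := by
      exact_mod_cast Int.toNat_of_nonneg (by omega : (0:ℤ) ≤ a)
    calc (2 * (a:ℝ))⁻¹ = (Finset.Icc (1:ℤ) a).card • ((2 * (a:ℝ)^2)⁻¹) := by
          rw [hcard, nsmul_eq_mul, hcast]
          field_simp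
      _ ≤ ∑ b ∈ Finset.Icc (1:ℤ) a, (((a : ℝ))^2 + ((b : ℝ))^2)⁻¹ := by
          apply Finset.card_nsmul_le_sum
          intro b hb
          rw [Finset.mem_Icc] at hb
          have hb1 : (1:ℝ) ≤ (b:ℝ) := by exact_mod_cast hb.1
          have hba : (b:ℝ) ≤ (a:ℝ) := by exact_mod_cast hb.2
          apply inv_anti₀ (by positivity)
          nlinarith
      _ ≤ ∑ b ∈ Finset.Icc (1:ℤ) (K:ℤ), (((a : ℝ))^2 + ((b : ℝ))^2)⁻¹ := by
          apply Finset.sum_le_sum_of_subset_of_nonneg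
          · exact Finset.Icc_subset_Icc le_rfl ha.2
          · intros; positivity
  calc (1/2 : ℝ) * Real.log (K+1) ≤ (1/2) * ∑ a ∈ Finset.Icc (1:ℤ) (K:ℤ), ((a:ℝ))⁻¹ := by
        have := harm K
        linarith
    _ = ∑ a ∈ Finset.Icc (1:ℤ) (K:ℤ), (2 * (a:ℝ))⁻¹ := by
        rw [Finset.mul_sum]
        apply Finset.sum_congr rfl
        intro a _
        rw [mul_inv]
        ring
    _ ≤ _ := Finset.sum_le_sum step1

lemma quad_lower (hK1 : 1 ≤ K) :
    (1/8 : ℝ) * Real.log (K+1) ≤ ∑ m ∈ S2 K, ∑ n ∈ S2 K, ww K m n := by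
  classical
  set e : (ℤ × ℤ) × (ℤ × ℤ) → (ℤ × ℤ) × (ℤ × ℤ) := fun q => (q.1, q.1 + q.2) with he
  have hinj : ∀ q ∈ SK K ×ˢ DD K, ∀ q' ∈ SK K ×ˢ DD K, e q = e q' → q = q' := by
    intro q _ q' _ h
    rw [he] at h
    simp only [Prod.mk.injEq] at h
    obtain ⟨h1, h2⟩ := h
    rw [h1] at h2
    exact Prod.ext h1 (by exact add_left_cancel h2)
  have hmem : ∀ q ∈ SK K ×ˢ DD K,
      q.1 ∈ S2 K ∧ q.1 + q.2 ∈ S2 K ∧ q.1 ≠ q.1 + q.2 := by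
    rintro ⟨m, d⟩ hq
    simp only [SK, DD, S2, Finset.mem_product, Finset.mem_Icc] at hq ⊢
    refine ⟨⟨⟨by omega, by omega⟩, by omega, by omega⟩, ⟨⟨?_, ?_⟩, ?_, ?_⟩, ?_⟩
    · show (0:ℤ) ≤ m.1 + d.1; omega
    · show m.1 + d.1 ≤ 2*K; omega
    · show (0:ℤ) ≤ m.2 + d.2; omega
    · show m.2 + d.2 ≤ 2*K; omega
    · intro hcon
      have : m.1 = m.1 + d.1 := congrArg (Prod.fst) hcon
      omega
  have key : ∑ q ∈ SK K ×ˢ DD K, ww K q.1 (q.1 + q.2)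
      ≤ ∑ m ∈ S2 K, ∑ n ∈ S2 K, ww K m n := by
    calc ∑ q ∈ SK K ×ˢ DD K, ww K q.1 (q.1 + q.2)
        = ∑ p ∈ (SK K ×ˢ DD K).image e, ww K p.1 p.2 := (Finset.sum_image (f := fun p : (ℤ×ℤ)×(ℤ×ℤ) => ww K p.1 p.2) hinj).symm
      _ ≤ ∑ p ∈ S2 K ×ˢ S2 K, ww K p.1 p.2 := by
          apply Finset.sum_le_sum_of_subset_of_nonneg
          · intro p hp
            rw [Finset.mem_image] at hp
            obtain ⟨q, hq, rfl⟩ := hp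
            obtain ⟨h1, h2, _⟩ := hmem q hq
            simp only [Finset.mem_product]
            exact ⟨h1, h2⟩
          · intro p _ _
            exact ww_nonneg K p.1 p.2
      _ = ∑ m ∈ S2 K, ∑ n ∈ S2 K, ww K m n := Finset.sum_product _ _ _
  refine le_trans ?_ key
  have hval : ∀ q ∈ SK K ×ˢ DD K,
      ww K q.1 (q.1 + q.2) = (((q.2.1 : ℝ))^2 + ((q.2.2 : ℝ))^2)⁻¹ * eps K ^ 2 := by
    intro q hq
    obtain ⟨h1, h2, h3⟩ := hmem q hq
    rw [ww_eq K _ _ h1 h2 h3]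
    congr 1
    have e1 : (q.1 + q.2).1 = q.1.1 + q.2.1 := rfl
    have e2 : (q.1 + q.2).2 = q.1.2 + q.2.2 := rfl
    rw [e1, e2]
    push_cast
    ring
  rw [Finset.sum_congr rfl hval, Finset.sum_product]
  simp only [Finset.sum_const]
  rw [nsmul_eq_mul, ← Finset.sum_mul, card_SK]
  push_cast
  have hD := sum_DD K
  have hL0 : 0 ≤ Real.log ((K:ℝ)+1) := Real.log_nonneg (by
    have : (1:ℝ) ≤ (K:ℝ) := by exact_mod_cast hK1
    linarith)
  set Sg : ℝ := ∑ d ∈ DD K, (((d.1:ℝ))^2 + ((d.2:ℝ))^2)⁻¹ with hSg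
  have hSg0 : 0 ≤ Sg := by positivity
  have hfac : (1/4:ℝ) ≤ ((K:ℝ)+1)^2 * eps K ^ 2 := by
    unfold eps
    rw [inv_pow, ← div_eq_mul_inv, le_div_iff₀ (by positivity)]
    push_cast
    nlinarith [Nat.cast_nonneg (α := ℝ) K]
  calc (1/8:ℝ) * Real.log ((K:ℝ)+1) = (1/4) * ((1/2) * Real.log ((K:ℝ)+1)) := by ring
    _ ≤ (1/4) * Sg := by
        apply mul_le_mul_of_nonneg_left _ (by norm_num)
        exact hD
    _ ≤ (((K:ℝ)+1)^2 * eps K ^ 2) * Sg := mul_le_mul_of_nonneg_right hfac hSg0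
    _ = ((K:ℝ)+1)^2 * (Sg * eps K ^ 2) := by ring

lemma ww_zero (m n : ℤ × ℤ) (h : m ∉ S2 K ∨ n ∉ S2 K) : ww K m n = 0 := by
  unfold ww
  rw [uu_re]
  rcases h with h | h <;> simp [h]

lemma finsum_eq_sum' :
    (∑ᶠ m : ℤ × ℤ, ∑ᶠ n : ℤ × ℤ, ww K m n) = ∑ m ∈ S2 K, ∑ n ∈ S2 K, ww K m n := by
  have hinner : ∀ m, (∑ᶠ n, ww K m n) = ∑ n ∈ S2 K, ww K m n := by
    intro m
    apply finsum_eq_finset_sum_of_support_subset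
    intro n hn
    by_contra h
    exact hn (ww_zero K m n (Or.inr (by simpa using h)))
  calc (∑ᶠ m : ℤ × ℤ, ∑ᶠ n : ℤ × ℤ, ww K m n)
      = ∑ᶠ m : ℤ × ℤ, ∑ n ∈ S2 K, ww K m n := finsum_congr hinner
    _ = ∑ m ∈ S2 K, ∑ n ∈ S2 K, ww K m n := by
        apply finsum_eq_finset_sum_of_support_subset
        intro m hm
        by_contra h
        exact hm (Finset.sum_eq_zero fun n _ => ww_zero K m n (Or.inl (by simpa using h)))

/-- Lemma 4.10 (Lemma `rho`): for `r ≥ 3`, the matrix `{1/|m - n|²}` (zero diagonal) indexed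
by the Gaussian integers of modulus at most `r` has operator norm on `ℓ²` at least
`c log r`: there is a unit vector `u` supported there whose quadratic form is `≥ c log r`. -/
theorem stmt_9 :
    ∃ c > (0 : ℝ), ∀ r : ℝ, 3 ≤ r →
      ∃ u : ℤ × ℤ → ℂ,
        (∀ m : ℤ × ℤ, u m ≠ 0 → ‖gaussInt m‖ ≤ r) ∧
        (∑ᶠ m : ℤ × ℤ, ‖u m‖ ^ 2) = 1 ∧
        c * Real.log r ≤ ∑ᶠ m : ℤ × ℤ, ∑ᶠ n : ℤ × ℤ,
          (if m = n then (0 : ℝ) else (‖gaussInt m - gaussInt n‖ ^ 2)⁻¹)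
            * (u n * conj (u m)).re := by
  refine ⟨1/32, by norm_num, fun r hr => ?_⟩
  set K : ℕ := max 1 ⌊r/4⌋₊ with hKdef
  have hK1 : 1 ≤ K := le_max_left _ _
  have hK1' : (1:ℝ) ≤ (K:ℝ) := by exact_mod_cast hK1
  have hK2 : 8 * (K:ℝ)^2 ≤ r^2 := by
    rcases le_or_gt 4 r with h4 | h4
    · have hfl : (K:ℝ) ≤ r/4 := by
        rw [hKdef]
        push_cast [Nat.cast_max]
        exact max_le (by linarith) (Nat.floor_le (by linarith))
      nlinarith
    · have hfl : ⌊r/4⌋₊ ≤ 1 := by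
        have : r/4 < 2 := by linarith
        exact Nat.lt_succ_iff.mp (by
          have h0 : (0:ℝ) ≤ r/4 := by linarith
          exact_mod_cast Nat.floor_lt h0 |>.mpr this)
      have hKe : K = 1 := by omega
      rw [hKe]
      push_cast
      nlinarith
  refine ⟨uu K, ?_, norm_one K, ?_⟩
  · intro m hm
    have hmS : m ∈ S2 K := by
      by_contra h
      exact hm (by simp [uu, if_neg h])
    have habs := abs_gaussInt_sq m
    simp only [S2, Finset.mem_product, Finset.mem_Icc] at hmS
    have hx0 : (0:ℝ) ≤ (m.1:ℝ) := by exact_mod_cast hmS.1.1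
    have hx2 : (m.1:ℝ) ≤ 2*(K:ℝ) := by exact_mod_cast hmS.1.2
    have hy0 : (0:ℝ) ≤ (m.2:ℝ) := by exact_mod_cast hmS.2.1
    have hy2 : (m.2:ℝ) ≤ 2*(K:ℝ) := by exact_mod_cast hmS.2.2
    have hnn := norm_nonneg (gaussInt m)
    nlinarith [habs, hK2, hr]
  · have hform : (∑ᶠ m : ℤ × ℤ, ∑ᶠ n : ℤ × ℤ,
        (if m = n then (0 : ℝ) else (‖gaussInt m - gaussInt n‖ ^ 2)⁻¹)
          * (uu K n * conj (uu K m)).re) = ∑ m ∈ S2 K, ∑ n ∈ S2 K, ww K m n := finsum_eq_sum' K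
    rw [hform]
    refine le_trans ?_ (quad_lower K hK1)
    have hr4 : r ≤ 4 * ((K:ℝ)+1) := by
      have h1 : r/4 < ⌊r/4⌋₊ + 1 := Nat.lt_floor_add_one _
      have h2 : (⌊r/4⌋₊:ℝ) ≤ (K:ℝ) := by
        rw [hKdef]; push_cast [Nat.cast_max]; exact le_max_right _ _
      linarith
    have hrK4 : r ≤ ((K:ℝ)+1)^4 := by nlinarith
    have hlog := Real.log_le_log (by linarith : (0:ℝ) < r) hrK4
    rw [show ((K:ℝ)+1)^4 = ((K:ℝ)+1)^(4:ℕ) by norm_num, Real.log_pow] at hlog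
    push_cast at hlog ⊢
    linarith
end

section
/- Let 𝔉 be a closed subset of ℂ, f : 𝔉 → ℂ continuous, δ > 0, and K ≥ 0. Then: (a) if ‖f(N)A − Af(N)‖ ≤ K for every complex Hilbert space H, every bounded normal operator N on H with spectrum in 𝔉 and every bounded self-adjoint operator A on H with ‖A‖ = 1 and ‖NA − AN‖ ≤ δ, then ‖f(N₁) − f(N₂)‖ ≤ K for all bounded normal operators N₁, N₂ (on any complex Hilbert space) with spectra in 𝔉 and ‖N₁ − N₂‖ ≤ δ; (b) conversely, if ‖f(N₁) − f(N₂)‖ ≤ K for all bounded normal operators N₁, N₂ (on any complex Hilbert space) with spectra in 𝔉 and ‖N₁ − N₂‖ ≤ δ, then ‖f(N)A − Af(N)‖ ≤ 2K for every bounded normal operator N with spectrum in 𝔉 and every bounded self-adjoint operator A with ‖A‖ = 1 and ‖NA − AN‖ ≤ δ. (In terms of the operator modulus of continuity Ω_f and the self-commutator modulus Ω_f^{SA}, this says Ω_f ≤ Ω_f^{SA} ≤ 2Ω_f.) -/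
noncomputable section

variable {H : Type} [NormedAddCommGroup H] [InnerProductSpace ℂ H] [CompleteSpace H]

abbrev E2 (H : Type) [NormedAddCommGroup H] [InnerProductSpace ℂ H] : Type := WithLp 2 (H × H)

def eqL2 : E2 H ≃L[ℂ] H × H := WithLp.prodContinuousLinearEquiv 2 ℂ H H

def dsum (S T : H →L[ℂ] H) : E2 H →L[ℂ] E2 H :=
  (((eqL2 (H := H)).symm : (H × H) →L[ℂ] E2 H).comp
    ((S.prodMap T).comp ((eqL2 (H := H)) : E2 H →L[ℂ] (H × H))))

def swapL : E2 H →L[ℂ] E2 H :=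
  (((eqL2 (H := H)).symm : (H × H) →L[ℂ] E2 H).comp
    ((((ContinuousLinearMap.snd ℂ H H).prod (ContinuousLinearMap.fst ℂ H H))).comp
      ((eqL2 (H := H)) : E2 H →L[ℂ] (H × H))))

lemma dsum_fst (S T : H →L[ℂ] H) (x : E2 H) : (dsum S T x).fst = S x.fst := rfl
lemma dsum_snd (S T : H →L[ℂ] H) (x : E2 H) : (dsum S T x).snd = T x.snd := rfl
lemma swapL_fst (x : E2 H) : (swapL x).fst = x.snd := rfl
lemma swapL_snd (x : E2 H) : (swapL x).snd = x.fst := rfl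

lemma E2_ext {x y : E2 H} (h1 : x.fst = y.fst) (h2 : x.snd = y.snd) : x = y := WithLp.ofLp_injective 2 (Prod.ext h1 h2)

def emk (a b : H) : E2 H := (WithLp.equiv 2 (H × H)).symm (a, b)

lemma emk_fst (a b : H) : (emk a b).fst = a := rfl
lemma emk_snd (a b : H) : (emk a b).snd = b := rfl

lemma emk_norm_snd (v : H) : ‖emk (0:H) v‖ = ‖v‖ := by
  rw [WithLp.prod_norm_eq_of_L2, emk_fst, emk_snd]
  simp [Real.sqrt_sq]

lemma norm_fst_le_E2 (x : E2 H) : ‖x.fst‖ ≤ ‖x‖ := by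
  have h := WithLp.prod_norm_sq_eq_of_L2 x
  nlinarith [norm_nonneg x, norm_nonneg x.fst, norm_nonneg x.snd, sq_nonneg ‖x.snd‖]

-- operator norm bound via componentwise bound
lemma opnorm_le_of_sq (L : E2 H →L[ℂ] E2 H) (m : ℝ) (hm : 0 ≤ m)
    (h : ∀ x : E2 H, ‖(L x).fst‖^2 + ‖(L x).snd‖^2 ≤ m^2 * (‖x.fst‖^2 + ‖x.snd‖^2)) :
    ‖L‖ ≤ m := by
  apply ContinuousLinearMap.opNorm_le_bound _ hm
  intro x
  have h1 : ‖L x‖^2 ≤ (m * ‖x‖)^2 := by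
    rw [WithLp.prod_norm_sq_eq_of_L2, mul_pow]
    calc ‖(L x).fst‖^2 + ‖(L x).snd‖^2 ≤ m^2 * (‖x.fst‖^2 + ‖x.snd‖^2) := h x
      _ = m^2 * ‖x‖^2 := by rw [← WithLp.prod_norm_sq_eq_of_L2]
  have h2 := Real.sqrt_le_sqrt h1
  rwa [Real.sqrt_sq (norm_nonneg _), Real.sqrt_sq (mul_nonneg hm (norm_nonneg _))] at h2

lemma star_dsum (S T : H →L[ℂ] H) : star (dsum S T) = dsum (star S) (star T) := by
  have h : dsum (star S) (star T) = ContinuousLinearMap.adjoint (dsum S T) := by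
    rw [ContinuousLinearMap.eq_adjoint_iff]
    intro x y
    rw [WithLp.prod_inner_apply, WithLp.prod_inner_apply]
    show inner ℂ (star S x.fst) y.fst + inner ℂ (star T x.snd) y.snd =
      inner ℂ x.fst (S y.fst) + inner ℂ x.snd (T y.snd)
    rw [ContinuousLinearMap.star_eq_adjoint, ContinuousLinearMap.star_eq_adjoint,
      ContinuousLinearMap.adjoint_inner_left, ContinuousLinearMap.adjoint_inner_left]
  rw [ContinuousLinearMap.star_eq_adjoint, h]

lemma isSelfAdjoint_swapL : IsSelfAdjoint (swapL : E2 H →L[ℂ] E2 H) := by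
  rw [IsSelfAdjoint, ContinuousLinearMap.star_eq_adjoint]
  symm
  rw [ContinuousLinearMap.eq_adjoint_iff]
  intro x y
  rw [WithLp.prod_inner_apply, WithLp.prod_inner_apply]
  show inner ℂ x.snd y.fst + inner ℂ x.fst y.snd = inner ℂ x.fst y.snd + inner ℂ x.snd y.fst
  ring

def dsumHom : ((H →L[ℂ] H) × (H →L[ℂ] H)) →⋆ₐ[ℂ] (E2 H →L[ℂ] E2 H) where
  toFun p := dsum p.1 p.2
  map_one' := ContinuousLinearMap.ext fun x => E2_ext rfl rfl
  map_mul' p q := ContinuousLinearMap.ext fun x => E2_ext rfl rfl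
  map_zero' := ContinuousLinearMap.ext fun x => E2_ext rfl rfl
  map_add' p q := ContinuousLinearMap.ext fun x => E2_ext rfl rfl
  commutes' r := ContinuousLinearMap.ext fun x => E2_ext rfl rfl
  map_star' p := by
    show dsum (star p.1) (star p.2) = star (dsum p.1 p.2)
    rw [star_dsum]

lemma dsum_norm_le (S T : H →L[ℂ] H) (m : ℝ) (hm : 0 ≤ m) (hS : ‖S‖ ≤ m) (hT : ‖T‖ ≤ m) :
    ‖dsum S T‖ ≤ m := by
  apply opnorm_le_of_sq _ m hm
  intro x
  rw [dsum_fst, dsum_snd]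
  have h1 : ‖S x.fst‖ ≤ m * ‖x.fst‖ :=
    le_trans (S.le_opNorm _) (by gcongr)
  have h2 : ‖T x.snd‖ ≤ m * ‖x.snd‖ :=
    le_trans (T.le_opNorm _) (by gcongr)
  have h1' := pow_le_pow_left₀ (norm_nonneg _) h1 2
  have h2' := pow_le_pow_left₀ (norm_nonneg _) h2 2
  nlinarith [sq_nonneg ‖x.fst‖, sq_nonneg ‖x.snd‖]

lemma dsumHom_continuous : Continuous (dsumHom (H := H)) := by
  apply AddMonoidHomClass.continuous_of_bound (dsumHom (H := H)) 1
  intro p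
  rw [one_mul]
  apply dsum_norm_le _ _ _ (norm_nonneg p)
  · exact norm_fst_le p
  · exact norm_snd_le p

lemma spec_pair (S T : H →L[ℂ] H) :
    spectrum ℂ ((S, T) : (H →L[ℂ] H) × (H →L[ℂ] H)) ⊆ spectrum ℂ S ∪ spectrum ℂ T := by
  intro z hz
  by_contra hcon
  rw [Set.mem_union] at hcon
  push_neg at hcon
  obtain ⟨h1, h2⟩ := hcon
  rw [spectrum.notMem_iff] at h1 h2
  obtain ⟨u₁, hu₁⟩ := h1
  obtain ⟨u₂, hu₂⟩ := h2
  have : IsUnit (algebraMap ℂ ((H →L[ℂ] H) × (H →L[ℂ] H)) z - (S, T)) := by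
    refine ⟨⟨((u₁ : H →L[ℂ] H), (u₂ : H →L[ℂ] H)), ((↑u₁⁻¹ : H →L[ℂ] H), (↑u₂⁻¹ : H →L[ℂ] H)),
      ?_, ?_⟩, ?_⟩
    · exact Prod.ext (by simp) (by simp)
    · exact Prod.ext (by simp) (by simp)
    · exact Prod.ext hu₁ hu₂
  exact (spectrum.notMem_iff.mpr this) hz

lemma pair_isStarNormal {S T : H →L[ℂ] H} (hS : IsStarNormal S) (hT : IsStarNormal T) :
    IsStarNormal ((S, T) : (H →L[ℂ] H) × (H →L[ℂ] H)) := by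
  constructor
  show star (S, T) * (S, T) = (S, T) * star (S, T)
  exact Prod.ext hS.star_comm_self.eq hT.star_comm_self.eq

set_option maxHeartbeats 1000000 in
theorem partA
    (F₀ : Set ℂ) (f : ℂ → ℂ) (hf : ContinuousOn f F₀) (δ K : ℝ) (hδ : 0 < δ) (hK : 0 ≤ K)
    (hyp : ∀ (H' : Type) [NormedAddCommGroup H'] [InnerProductSpace ℂ H'] [CompleteSpace H']
        (N A : H' →L[ℂ] H'), IsStarNormal N → spectrum ℂ N ⊆ F₀ →
        IsSelfAdjoint A → ‖A‖ = 1 → ‖N * A - A * N‖ ≤ δ →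
        ‖cfc f N * A - A * cfc f N‖ ≤ K)
    (N₁ N₂ : H →L[ℂ] H) (h₁ : IsStarNormal N₁) (h₂ : IsStarNormal N₂)
    (hs₁ : spectrum ℂ N₁ ⊆ F₀) (hs₂ : spectrum ℂ N₂ ⊆ F₀) (hd : ‖N₁ - N₂‖ ≤ δ) :
    ‖cfc f N₁ - cfc f N₂‖ ≤ K := by
  by_cases hH : Nontrivial H
  case neg =>
    rw [not_nontrivial_iff_subsingleton] at hH
    haveI := hH
    haveI : Subsingleton (H →L[ℂ] H) :=
      ⟨fun a b => ContinuousLinearMap.ext fun x => Subsingleton.elim _ _⟩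
    calc ‖cfc f N₁ - cfc f N₂‖ = ‖(0 : H →L[ℂ] H)‖ := by
          rw [Subsingleton.elim (cfc f N₁ - cfc f N₂) (0 : H →L[ℂ] H)]
      _ = 0 := norm_zero
      _ ≤ K := hK
  case pos =>
    haveI := hH
    have hpair : IsStarNormal ((N₁, N₂) : (H →L[ℂ] H) × (H →L[ℂ] H)) := pair_isStarNormal h₁ h₂
    have hspair : spectrum ℂ ((N₁, N₂) : (H →L[ℂ] H) × (H →L[ℂ] H)) ⊆ F₀ :=
      (spec_pair N₁ N₂).trans (Set.union_subset hs₁ hs₂)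
    have hfpair : ContinuousOn f (spectrum ℂ ((N₁, N₂) : (H →L[ℂ] H) × (H →L[ℂ] H))) :=
      hf.mono hspair
    set D : E2 H →L[ℂ] E2 H := dsumHom (N₁, N₂) with hD
    have hDnormal : IsStarNormal D := by
      constructor
      show star D * D = D * star D
      rw [hD, ← map_star, ← map_mul, ← map_mul, hpair.star_comm_self.eq]
    have hDspec : spectrum ℂ D ⊆ F₀ := by
      refine le_trans ?_ hspair
      exact AlgHom.spectrum_apply_subset (dsumHom (H := H)).toAlgHom (N₁, N₂)
    have hSA : IsSelfAdjoint (swapL (H := H)) := isSelfAdjoint_swapL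
    have hsw1 : ‖swapL (H := H)‖ = 1 := by
      apply le_antisymm
      · apply opnorm_le_of_sq _ 1 zero_le_one
        intro x
        rw [swapL_fst, swapL_snd]
        nlinarith [sq_nonneg ‖x.fst‖, sq_nonneg ‖x.snd‖]
      · obtain ⟨v, hv⟩ := exists_ne (0 : H)
        have h1 : ‖swapL (emk (0:H) v)‖ = ‖v‖ := by
          have he : swapL (emk (0:H) v) = emk v 0 := E2_ext rfl rfl
          rw [he, WithLp.prod_norm_eq_of_L2, emk_fst, emk_snd]
          simp
        have h2 := (swapL (H := H)).le_opNorm (emk (0:H) v)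
        rw [h1, emk_norm_snd] at h2
        have hvpos : 0 < ‖v‖ := norm_pos_iff.mpr hv
        nlinarith
    have upper : ∀ S T : H →L[ℂ] H, ‖dsum S T * swapL - swapL * dsum S T‖ ≤ ‖S - T‖ := by
      intro S T
      apply opnorm_le_of_sq _ _ (norm_nonneg _)
      set M : E2 H →L[ℂ] E2 H := dsum S T * swapL - swapL * dsum S T with hM
      have ef : ∀ y : E2 H, (M y).fst = (S - T) y.snd := fun _ => rfl
      have es : ∀ y : E2 H, (M y).snd = (T - S) y.fst := fun _ => rfl
      intro x
      rw [ef x, es x]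
      have h1 : ‖(S - T) x.snd‖ ≤ ‖S - T‖ * ‖x.snd‖ := ContinuousLinearMap.le_opNorm _ _
      have h2 : ‖(T - S) x.fst‖ ≤ ‖S - T‖ * ‖x.fst‖ := by
        have h := ContinuousLinearMap.le_opNorm (T - S) x.fst
        rwa [norm_sub_rev] at h
      have h1' := pow_le_pow_left₀ (norm_nonneg _) h1 2
      have h2' := pow_le_pow_left₀ (norm_nonneg _) h2 2
      nlinarith [sq_nonneg ‖x.fst‖, sq_nonneg ‖x.snd‖]
    have lower : ∀ S T : H →L[ℂ] H, ‖S - T‖ ≤ ‖dsum S T * swapL - swapL * dsum S T‖ := by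
      intro S T
      set M : E2 H →L[ℂ] E2 H := dsum S T * swapL - swapL * dsum S T with hM
      apply ContinuousLinearMap.opNorm_le_bound _ (norm_nonneg M)
      intro v
      have h1 : M (emk (0:H) v) = emk ((S - T) v) 0 := by
        apply E2_ext
        · rfl
        · show (T - S) (emk (0:H) v).fst = (0:H)
          rw [emk_fst]
          exact map_zero _
      have h2 := M.le_opNorm (emk (0:H) v)
      have h3 : ‖emk ((S - T) v) (0:H)‖ = ‖(S - T) v‖ := by
        rw [WithLp.prod_norm_eq_of_L2, emk_fst, emk_snd]
        simp
      rw [h1, emk_norm_snd, h3] at h2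
      exact h2
    have hDcomm : ‖D * swapL - swapL * D‖ ≤ δ := le_trans (upper N₁ N₂) hd
    have happ := hyp (E2 H) D swapL hDnormal hDspec hSA hsw1 hDcomm
    have hcfcpair : cfc f ((N₁, N₂) : (H →L[ℂ] H) × (H →L[ℂ] H)) = (cfc f N₁, cfc f N₂) := by
      apply Prod.ext
      · exact StarAlgHom.map_cfc (StarAlgHom.fst ℂ (H →L[ℂ] H) (H →L[ℂ] H)) f (N₁, N₂)
          hfpair continuous_fst hpair h₁
      · exact StarAlgHom.map_cfc (StarAlgHom.snd ℂ (H →L[ℂ] H) (H →L[ℂ] H)) f (N₁, N₂)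
          hfpair continuous_snd hpair h₂
    have hcfcD : cfc f D = dsumHom (cfc f N₁, cfc f N₂) := by
      rw [← hcfcpair]
      exact (StarAlgHom.map_cfc (dsumHom (H := H)) f (N₁, N₂) hfpair dsumHom_continuous
        hpair hDnormal).symm
    rw [hcfcD] at happ
    exact le_trans (lower (cfc f N₁) (cfc f N₂)) happ

end


open Complex

noncomputable def conjSAH {A : Type*} [NormedRing A] [StarRing A] [NormedAlgebra ℂ A]
    (U : A) (h1 : star U * U = 1) (h2 : U * star U = 1) : A →⋆ₐ[ℂ] A where
  toFun X := U * X * star U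
  map_one' := by show U * 1 * star U = 1; rw [mul_one, h2]
  map_mul' X Y := by
    show U * (X * Y) * star U = (U * X * star U) * (U * Y * star U)
    calc U * (X * Y) * star U = (U * X) * (star U * U) * (Y * star U) := by
          rw [h1]; noncomm_ring
      _ = (U * X * star U) * (U * Y * star U) := by noncomm_ring
  map_zero' := by show U * 0 * star U = 0; simp
  map_add' X Y := by show U * (X + Y) * star U = _; noncomm_ring
  commutes' r := by
    show U * algebraMap ℂ A r * star U = algebraMap ℂ A r
    simp only [Algebra.algebraMap_eq_smul_one]
    rw [mul_smul_comm, mul_one, smul_mul_assoc, h2]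
  map_star' X := by
    show U * star X * star U = star (U * X * star U)
    simp only [star_mul, star_star]; rw [mul_assoc]

set_option maxHeartbeats 1000000 in
theorem partB {H : Type} [NormedAddCommGroup H] [InnerProductSpace ℂ H] [CompleteSpace H]
    (F : Set ℂ) (f : ℂ → ℂ) (hf : ContinuousOn f F) (δ K : ℝ) (hδ : 0 < δ) (hK : 0 ≤ K)
    (hyp : ∀ (N₁ N₂ : H →L[ℂ] H), IsStarNormal N₁ → IsStarNormal N₂ →
        spectrum ℂ N₁ ⊆ F → spectrum ℂ N₂ ⊆ F → ‖N₁ - N₂‖ ≤ δ →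
        ‖cfc f N₁ - cfc f N₂‖ ≤ K)
    (N A : H →L[ℂ] H) (hN : IsStarNormal N) (hsp : spectrum ℂ N ⊆ F)
    (hA : IsSelfAdjoint A) (hA1 : ‖A‖ = 1) (hcomm : ‖N * A - A * N‖ ≤ δ) :
    ‖cfc f N * A - A * cfc f N‖ ≤ 2 * K := by
  have hAn : IsStarNormal A := hA.isStarNormal
  have key0 : ∀ x : ℝ, ((x:ℂ) + 2*I ≠ 0) ∧ ((x:ℂ) - 2*I ≠ 0) := by
    intro x
    constructor <;> (intro h; have := congrArg Complex.im h; simp at this)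
  have hre : ∀ z ∈ spectrum ℂ A, z = (z.re : ℂ) := fun z hz => hA.mem_spectrum_eq_re hz
  have hne : ∀ z ∈ spectrum ℂ A, z + 2*I ≠ 0 := by
    intro z hz; rw [hre z hz]; exact (key0 _).1
  have hne' : ∀ z ∈ spectrum ℂ A, z - 2*I ≠ 0 := by
    intro z hz; rw [hre z hz]; exact (key0 _).2
  set c : ℂ → ℂ := fun z => (z + 2*I)⁻¹ with hc
  have hcontc : ContinuousOn c (spectrum ℂ A) := by
    apply ContinuousOn.inv₀
    · fun_prop
    · exact hne
  set C : H →L[ℂ] H := cfc c A with hCdef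
  set B : H →L[ℂ] H := A + algebraMap ℂ _ (2*I) with hBdef
  have hBcfc : cfc (fun z : ℂ => z + 2*I) A = B := by
    have h := cfc_add (R := ℂ) (A := H →L[ℂ] H) (a := A) (fun z : ℂ => z) (fun _ : ℂ => 2*I)
      (by fun_prop) (by fun_prop)
    rw [h, cfc_id' ℂ A, cfc_const _ A]
  have hBC : B * C = 1 := by
    rw [← hBcfc, hCdef, ← cfc_mul _ _ A]
    rw [cfc_congr (g := fun _ => (1:ℂ)) (fun z hz => mul_inv_cancel₀ (hne z hz))]
    exact cfc_one ℂ A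
  have hCB : C * B = 1 := by
    rw [← hBcfc, hCdef, ← cfc_mul _ _ A]
    rw [cfc_congr (g := fun _ => (1:ℂ)) (fun z hz => inv_mul_cancel₀ (hne z hz))]
    exact cfc_one ℂ A
  set g : ℂ → ℂ := fun z => (z - 2*I) * (z + 2*I)⁻¹ with hg
  have hcontg : ContinuousOn g (spectrum ℂ A) := by
    apply ContinuousOn.mul
    · fun_prop
    · exact hcontc
  set U : H →L[ℂ] H := cfc g A with hUdef
  have habs : ∀ z ∈ spectrum ℂ A, star (g z) * g z = 1 := by
    intro z hz
    have e1 := hne' z hz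
    have e2 := hne z hz
    show star ((z - 2*I) * (z + 2*I)⁻¹) * ((z - 2*I) * (z + 2*I)⁻¹) = 1
    rw [hre z hz] at e1 e2 ⊢
    rw [Complex.star_def, map_mul, map_inv₀, map_sub, map_add, map_mul, Complex.conj_I,
      Complex.conj_ofReal]
    have c2 : (starRingEnd ℂ) (2:ℂ) = 2 := by
      rw [show ((2:ℂ)) = ((2:ℝ):ℂ) by norm_num, Complex.conj_ofReal]
    rw [c2]
    calc ((z.re:ℂ) - 2 * -I) * ((z.re:ℂ) + 2 * -I)⁻¹ * (((z.re:ℂ) - 2*I) * ((z.re:ℂ) + 2*I)⁻¹)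
        = ((z.re:ℂ) + 2*I) * ((((z.re:ℂ) - 2*I)⁻¹ * ((z.re:ℂ) - 2*I)) * ((z.re:ℂ) + 2*I)⁻¹) := by
          ring
      _ = 1 := by rw [inv_mul_cancel₀ e1, one_mul, mul_inv_cancel₀ e2]
  have habs' : ∀ z ∈ spectrum ℂ A, g z * star (g z) = 1 := by
    intro z hz; rw [mul_comm]; exact habs z hz
  have hU1 : star U * U = 1 := by
    rw [hUdef, ← cfc_star, ← cfc_mul _ _ A]
    rw [cfc_congr (g := fun _ => (1:ℂ)) habs]
    exact cfc_one ℂ A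
  have hU2 : U * star U = 1 := by
    rw [hUdef, ← cfc_star, ← cfc_mul _ _ A]
    rw [cfc_congr (g := fun _ => (1:ℂ)) habs']
    exact cfc_one ℂ A
  have hUC : U = 1 - (4*I) • C := by
    rw [hUdef, hCdef]
    have h1 : cfc (fun z : ℂ => (1:ℂ) - (4*I) • c z) A = 1 - (4*I) • cfc c A := by
      rw [cfc_sub (fun _ => (1:ℂ)) (fun z => (4*I) • c z) A, cfc_smul (4*I) c A]
      congr 1
      exact cfc_one ℂ A
    rw [← h1]
    apply cfc_congr
    intro z hz
    have e2 := hne z hz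
    show (z - 2*I) * (z + 2*I)⁻¹ = 1 - (4*I) • (z + 2*I)⁻¹
    rw [smul_eq_mul, show (1:ℂ) = (z + 2*I) * (z + 2*I)⁻¹ from (mul_inv_cancel₀ e2).symm,
      ← sub_mul]
    congr 1
    ring
  have comm_key : ∀ X : H →L[ℂ] H, X * U - U * X = (4*I) • (C * (X * A - A * X) * C) := by
    intro X
    have h1 : B * X - X * B = A * X - X * A := by
      rw [hBdef, add_mul, mul_add, Algebra.commutes (2*I) X]
      abel
    have h2 : X * C - C * X = C * (A * X - X * A) * C := by
      rw [← h1]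
      calc X * C - C * X = (C * B) * (X * C) - (C * X) * (B * C) := by
            rw [hCB, hBC, one_mul, mul_one]
        _ = C * (B * X - X * B) * C := by noncomm_ring
    have h3 : X * U - U * X = -((4*I) • (X * C - C * X)) := by
      rw [hUC]
      rw [mul_sub, sub_mul, mul_one, one_mul, mul_smul_comm, smul_mul_assoc, smul_sub]
      abel
    rw [h3, h2, ← smul_neg]
    congr 1
    noncomm_ring
  -- norm bounds
  have hCnorm : ‖C‖ ≤ 1/2 := by
    rw [hCdef]
    apply norm_cfc_le (by norm_num : (0:ℝ) ≤ 1/2)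
    intro z hz
    rw [hre z hz]
    have him : (2:ℝ) ≤ ‖(z.re:ℂ) + 2*I‖ := by
      have h := Complex.abs_im_le_norm ((z.re:ℂ) + 2*I)
      simpa using h
    show ‖((z.re:ℂ) + 2*I)⁻¹‖ ≤ 1/2
    rw [norm_inv]
    rw [show (1:ℝ)/2 = 2⁻¹ by norm_num]
    exact inv_anti₀ (by norm_num) him
  have hstarB : star B = A - algebraMap ℂ (H →L[ℂ] H) (2*I) := by
    rw [hBdef, star_add, hA.star_eq]
    rw [← algebraMap_star_comm]
    rw [show star (2*I : ℂ) = -(2*I) by simp [Complex.star_def, Complex.conj_I]]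
    rw [map_neg]
    abel
  have hsBB : star B * B = A * A + algebraMap ℂ (H →L[ℂ] H) (4:ℂ) := by
    have step1 : star B * B = A * A + A * algebraMap ℂ (H →L[ℂ] H) (2*I)
        - algebraMap ℂ (H →L[ℂ] H) (2*I) * A
        - algebraMap ℂ (H →L[ℂ] H) (2*I) * algebraMap ℂ (H →L[ℂ] H) (2*I) := by
      rw [hstarB, hBdef]; noncomm_ring
    rw [step1, Algebra.commutes (2*I) A, ← map_mul]
    rw [show (2*I : ℂ) * (2*I) = -4 by
      rw [show (2*I:ℂ) * (2*I) = 4 * (I*I) by ring, Complex.I_mul_I]; ring]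
    rw [map_neg]
    abel
  have hBn : ‖B‖ * ‖B‖ ≤ 5 := by
    rw [← CStarRing.norm_star_mul_self, hsBB]
    have h4 : ‖algebraMap ℂ (H →L[ℂ] H) (4:ℂ)‖ ≤ 4 := by
      rw [Algebra.algebraMap_eq_smul_one, norm_smul]
      have h1 : ‖(1 : H →L[ℂ] H)‖ ≤ 1 := by
        rw [ContinuousLinearMap.one_def]; exact ContinuousLinearMap.norm_id_le
      have h2 : ‖(4:ℂ)‖ = 4 := by norm_num
      rw [h2]; linarith
    calc ‖A * A + algebraMap ℂ (H →L[ℂ] H) (4:ℂ)‖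
        ≤ ‖A * A‖ + ‖algebraMap ℂ (H →L[ℂ] H) (4:ℂ)‖ := norm_add_le _ _
      _ ≤ ‖A‖ * ‖A‖ + 4 := add_le_add (norm_mul_le _ _) h4
      _ ≤ 5 := by rw [hA1]; norm_num
  have hsmul4 : ∀ Y : H →L[ℂ] H, ‖(4*I : ℂ) • Y‖ = 4 * ‖Y‖ := by
    intro Y
    rw [norm_smul]
    congr 1
    rw [norm_mul]
    simp
  have hNU : ‖N * U - U * N‖ ≤ δ := by
    rw [comm_key N, hsmul4]
    have e1 : ‖C * (N * A - A * N) * C‖ ≤ ‖C‖ * ‖N * A - A * N‖ * ‖C‖ := by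
      calc ‖C * (N * A - A * N) * C‖ ≤ ‖C * (N * A - A * N)‖ * ‖C‖ := norm_mul_le _ _
        _ ≤ ‖C‖ * ‖N * A - A * N‖ * ‖C‖ := by gcongr; exact norm_mul_le _ _
    have e2 : ‖C‖ * ‖N * A - A * N‖ * ‖C‖ ≤ (1/2) * δ * (1/2) := by
      gcongr <;> first | exact hCnorm | exact hcomm
    linarith
  have hUn : ‖U‖ ≤ 1 := by
    have h := CStarRing.norm_star_mul_self (x := U)
    rw [hU1] at h
    have h1 : ‖(1 : H →L[ℂ] H)‖ ≤ 1 := by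
      rw [ContinuousLinearMap.one_def]; exact ContinuousLinearMap.norm_id_le
    nlinarith [norm_nonneg U]
  set φ := conjSAH U hU1 hU2 with hφ
  have hφapp : ∀ Y : H →L[ℂ] H, φ Y = U * Y * star U := fun _ => rfl
  have hφcont : Continuous φ := by
    show Continuous fun Y : H →L[ℂ] H => U * Y * star U
    exact (continuous_const.mul continuous_id).mul continuous_const
  have hN₂ : IsStarNormal (φ N) := by
    constructor
    show star (φ N) * φ N = φ N * star (φ N)
    rw [← map_star, ← map_mul, ← map_mul, hN.star_comm_self.eq]
  have hsp₂ : spectrum ℂ (φ N) ⊆ F := by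
    set u : (H →L[ℂ] H)ˣ := ⟨U, star U, hU2, hU1⟩ with hu
    have h1 : φ N = ↑u * N * ↑u⁻¹ := rfl
    rw [h1, spectrum.units_conjugate]
    exact hsp
  have hdiff : ‖N - φ N‖ ≤ δ := by
    have he : (N * U - U * N) * star U = N - φ N := by
      rw [hφapp N, sub_mul, mul_assoc N U (star U), hU2, mul_one]
    rw [← he]
    calc ‖(N * U - U * N) * star U‖ ≤ ‖N * U - U * N‖ * ‖star U‖ := norm_mul_le _ _
      _ ≤ δ * 1 := by
          apply mul_le_mul hNU ?_ (norm_nonneg _) hδ.le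
          rw [norm_star]; exact hUn
      _ = δ := mul_one δ
  have hmapcfc : φ (cfc f N) = cfc f (φ N) :=
    StarAlgHom.map_cfc φ f N (hf.mono hsp) hφcont hN hN₂
  have happ := hyp N (φ N) hN hN₂ hsp hsp₂ hdiff
  rw [← hmapcfc, hφapp] at happ
  set X := cfc f N with hX
  have hXU : ‖X * U - U * X‖ ≤ K := by
    have he : (X - U * X * star U) * U = X * U - U * X := by
      rw [sub_mul, mul_assoc (U * X) (star U) U, hU1, mul_one]
    rw [← he]
    calc ‖(X - U * X * star U) * U‖ ≤ ‖X - U * X * star U‖ * ‖U‖ := norm_mul_le _ _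
      _ ≤ K * 1 := mul_le_mul happ hUn (norm_nonneg _) hK
      _ = K := mul_one K
  have hrecov : (4*I : ℂ) • (X * A - A * X) = B * (X * U - U * X) * B := by
    rw [comm_key X, mul_smul_comm, smul_mul_assoc]
    congr 1
    have hh : B * (C * (X * A - A * X) * C) * B = X * A - A * X := by
      calc B * (C * (X * A - A * X) * C) * B = (B * C) * (X * A - A * X) * (C * B) := by
            noncomm_ring
        _ = X * A - A * X := by rw [hBC, hCB, one_mul, mul_one]
    exact hh.symm
  have hnorm4 : 4 * ‖X * A - A * X‖ ≤ 5 * K := by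
    have h := congrArg norm hrecov
    rw [hsmul4] at h
    have hb : ‖B * (X * U - U * X) * B‖ ≤ ‖B‖ * ‖X * U - U * X‖ * ‖B‖ := by
      calc ‖B * (X * U - U * X) * B‖ ≤ ‖B * (X * U - U * X)‖ * ‖B‖ := norm_mul_le _ _
        _ ≤ ‖B‖ * ‖X * U - U * X‖ * ‖B‖ := by gcongr; exact norm_mul_le _ _
    nlinarith [norm_nonneg B, norm_nonneg (X * U - U * X), hBn, hXU, hK]
  linarith


/-- Theorem 5.3 (Theorem `mcc`): `Ω_f ≤ Ω_f^{SA} ≤ 2 Ω_f`, stated pointwise: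
(a) a uniform bound `K` on `‖f(N)A - Af(N)‖` over self-adjoint `A` of norm one with
`‖NA - AN‖ ≤ δ` yields `‖f(N₁) - f(N₂)‖ ≤ K` whenever `‖N₁ - N₂‖ ≤ δ`; (b) conversely,
a uniform bound `K` on `‖f(N₁) - f(N₂)‖` over `‖N₁ - N₂‖ ≤ δ` yields
`‖f(N)A - Af(N)‖ ≤ 2K` for such `A`. -/
theorem stmt_12 (F : Set ℂ) (hF : IsClosed F) (f : ℂ → ℂ) (hf : ContinuousOn f F)
    (δ : ℝ) (hδ : 0 < δ) (K : ℝ) (hK : 0 ≤ K) :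
    ((∀ (H : Type) [NormedAddCommGroup H] [InnerProductSpace ℂ H] [CompleteSpace H]
        (N A : H →L[ℂ] H), IsStarNormal N → spectrum ℂ N ⊆ F →
        IsSelfAdjoint A → ‖A‖ = 1 → ‖N * A - A * N‖ ≤ δ →
        ‖cfc f N * A - A * cfc f N‖ ≤ K) →
      (∀ (H : Type) [NormedAddCommGroup H] [InnerProductSpace ℂ H] [CompleteSpace H]
        (N₁ N₂ : H →L[ℂ] H), IsStarNormal N₁ → IsStarNormal N₂ →
        spectrum ℂ N₁ ⊆ F → spectrum ℂ N₂ ⊆ F → ‖N₁ - N₂‖ ≤ δ →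
        ‖cfc f N₁ - cfc f N₂‖ ≤ K))
    ∧
    ((∀ (H : Type) [NormedAddCommGroup H] [InnerProductSpace ℂ H] [CompleteSpace H]
        (N₁ N₂ : H →L[ℂ] H), IsStarNormal N₁ → IsStarNormal N₂ →
        spectrum ℂ N₁ ⊆ F → spectrum ℂ N₂ ⊆ F → ‖N₁ - N₂‖ ≤ δ →
        ‖cfc f N₁ - cfc f N₂‖ ≤ K) →
      (∀ (H : Type) [NormedAddCommGroup H] [InnerProductSpace ℂ H] [CompleteSpace H]
        (N A : H →L[ℂ] H), IsStarNormal N → spectrum ℂ N ⊆ F →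
        IsSelfAdjoint A → ‖A‖ = 1 → ‖N * A - A * N‖ ≤ δ →
        ‖cfc f N * A - A * cfc f N‖ ≤ 2 * K)) := by
  constructor
  · intro hyp H _ _ _ N₁ N₂ h₁ h₂ hs₁ hs₂ hd
    exact partA F f hf δ K hδ hK hyp N₁ N₂ h₁ h₂ hs₁ hs₂ hd
  · intro hyp H _ _ _ N A hN hsp hA hA1 hcomm
    exact partB F f hf δ K hδ hK
      (fun N₁ N₂ a b c d e => hyp H N₁ N₂ a b c d e) N A hN hsp hA hA1 hcomm
end
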